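/- arXiv:1703.10755 — 8 statements merged into one kernel-verified Lean document; each statement's English description precedes it below -/
import Mathlib

section
/- Let k, h : ℤ × ℤ → ℂ, written k_i^{(n)} = k(i,n) and h_i^{(m)} = h(i,m). Suppose that (i − m)·k_i^{(n)} = (2n − m − i)·h_{m−n+i}^{(m)} for all m, n, i ∈ ℤ. Then there exists λ ∈ ℂ such that k_i^{(m)} = h_i^{(m)} = δ_{m,i}·λ for all m, i ∈ ℤ. -/
/-- Lemma 2.1: if `(i − m)·k_i^{(n)} = (2n − m − i)·h_{m−n+i}^{(m)}` for all `m, n, i ∈ ℤ`,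
then there is `λ ∈ ℂ` with `k_i^{(m)} = h_i^{(m)} = δ_{m,i}·λ`. -/
theorem stmt0 (k h : ℤ × ℤ → ℂ)
    (hyp : ∀ m n i : ℤ,
      ((i : ℂ) - (m : ℂ)) * k (i, n) =
        (2 * (n : ℂ) - (m : ℂ) - (i : ℂ)) * h (m - n + i, m)) :
    ∃ lam : ℂ, ∀ m i : ℤ,
      k (i, m) = (if m = i then lam else 0) ∧
      h (i, m) = (if m = i then lam else 0) := by
  have castne : ∀ a b : ℤ, a ≠ b → ((a:ℂ) - b) ≠ 0 := by
    intro a b hab hc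
    exact hab (by exact_mod_cast sub_eq_zero.mp hc)
  have hOff : ∀ j i : ℤ, j ≠ i → h (j, i) = 0 := by
    intro j i hji
    have H := hyp i (2*i - j) i
    rw [show i - (2*i - j) + i = j from by ring] at H
    have hc : (2 * (((2*i - j : ℤ)) : ℂ) - i - i) = 2 * ((i:ℂ) - j) := by push_cast; ring
    rw [hc, show ((i:ℂ) - i) = 0 from by ring, zero_mul] at H
    have h2 : (2 : ℂ) * ((i:ℂ) - j) ≠ 0 := mul_ne_zero two_ne_zero (castne i j hji.symm)
    exact (mul_eq_zero.mp H.symm).resolve_left h2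
  have kOff : ∀ i m : ℤ, i ≠ m → k (i, m) = 0 := by
    intro i m him
    have H := hyp m m i
    rw [show m - m + i = i from by ring, hOff i m him, mul_zero] at H
    exact (mul_eq_zero.mp H).resolve_left (castne i m him)
  have diag : ∀ n m : ℤ, n ≠ m → k (n, n) = h (m, m) := by
    intro n m hnm
    have H := hyp m n n
    rw [show m - n + n = m from by ring, show (2*(n:ℂ) - m - n) = (n:ℂ) - m from by ring] at H
    exact mul_left_cancel₀ (castne n m hnm) H
  refine ⟨k (1,1), fun m i => ?_⟩
  have kd : ∀ n : ℤ, k (n, n) = k (1, 1) := by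
    intro n
    by_cases h0 : n = 0
    · subst h0
      rw [diag 0 2 (by decide), ← diag 1 2 (by decide)]
    · rw [diag n 0 h0, ← diag 1 0 (by decide)]
  have hd : ∀ m : ℤ, h (m, m) = k (1, 1) := by
    intro m
    by_cases h1 : m = 1
    · subst h1
      rw [← diag 0 1 (by decide), kd 0]
    · rw [← diag 1 m (Ne.symm h1), kd 1]
  constructor
  · by_cases hmi : m = i
    · subst hmi; simp [kd m]
    · simp [hmi, kOff i m (fun hc => hmi hc.symm)]
  · by_cases hmi : m = i
    · subst hmi; simp [hd m]
    · simp [hmi, hOff i m (fun hc => hmi hc.symm)]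
end

section
/- Let t, g : ℤ × ℤ → ℂ, written t_i^{(n)} = t(i,n) and g_i^{(m)} = g(i,m), and let ρ₂, ρ₃, θ₂, θ₃ : ℤ → ℂ. Suppose that: (1) i·t_i^{(n)} = −(m − n + i)·g_{m−n+i}^{(m)} for all i, m, n ∈ ℤ with i ≠ 0 and i ≠ n − m; (2) (m − 1)·ρ₂(n) + m·ρ₃(n) = −(m − n)·g_{m−n}^{(m)} for all m, n ∈ ℤ; (3) (n − 1)·θ₂(m) + n·θ₃(m) = (n − m)·t_{n−m}^{(n)} for all m, n ∈ ℤ. Then there exists a function μ : ℤ → ℂ such that for all n ∈ ℤ and all k ∈ ℤ with k ≠ −n one has t_{n+k}^{(n)} = μ(k)/(n + k) and g_{n+k}^{(n)} = −μ(k)/(n + k), and for all n ∈ ℤ one has ρ₂(n) = θ₂(n) = −μ(−n) and ρ₃(n) = θ₃(n) = μ(−n). -/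
/-- Lemma 2.2: solving the system of equations arising from the `(L, L)` component of a
biderivation of `W(0,0)`. -/
theorem stmt1 (t g : ℤ × ℤ → ℂ) (ρ₂ ρ₃ θ₂ θ₃ : ℤ → ℂ)
    (h1 : ∀ i m n : ℤ, i ≠ 0 → i ≠ n - m →
      (i : ℂ) * t (i, n) = -(((m : ℂ) - (n : ℂ) + (i : ℂ)) * g (m - n + i, m)))
    (h2 : ∀ m n : ℤ,
      ((m : ℂ) - 1) * ρ₂ n + (m : ℂ) * ρ₃ n = -(((m : ℂ) - (n : ℂ)) * g (m - n, m)))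
    (h3 : ∀ m n : ℤ,
      ((n : ℂ) - 1) * θ₂ m + (n : ℂ) * θ₃ m = ((n : ℂ) - (m : ℂ)) * t (n - m, n)) :
    ∃ μ : ℤ → ℂ,
      (∀ n k : ℤ, k ≠ -n →
        t (n + k, n) = μ k / ((n : ℂ) + (k : ℂ)) ∧
        g (n + k, n) = -(μ k / ((n : ℂ) + (k : ℂ)))) ∧
      (∀ n : ℤ, ρ₂ n = -μ (-n) ∧ θ₂ n = -μ (-n) ∧ ρ₃ n = μ (-n) ∧ θ₃ n = μ (-n)) := by
  set μ : ℤ → ℂ := fun k => t (1, 1 - k) with hμ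
  -- base identity: t(1, 1-k) = - g(1, 1-k)
  have base : ∀ k : ℤ, μ k = - g (1, 1 - k) := by
    intro k
    have B := h1 1 (1 - k) (1 - k) one_ne_zero (by omega)
    have e : (1 - k) - (1 - k) + 1 = (1 : ℤ) := by ring
    rw [e] at B
    simpa [hμ] using B
  have key_t : ∀ n k : ℤ, k ≠ -n → ((n : ℂ) + (k : ℂ)) * t (n + k, n) = μ k := by
    intro n k hk
    have hnk : n + k ≠ 0 := by omega
    have A := h1 (n + k) (1 - k) n hnk (by omega)
    have e : (1 - k) - n + (n + k) = (1 : ℤ) := by ring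
    rw [e] at A
    rw [base k]
    push_cast at A ⊢
    linear_combination A
  have key_g : ∀ n k : ℤ, k ≠ -n → ((n : ℂ) + (k : ℂ)) * g (n + k, n) = - μ k := by
    intro n k hk
    have A := h1 1 n (1 - k) one_ne_zero (by omega)
    have e : n - (1 - k) + 1 = n + k := by ring
    rw [e] at A
    rw [hμ]
    push_cast at A ⊢
    linear_combination A
  have hcast : ∀ n k : ℤ, k ≠ -n → ((n : ℂ) + (k : ℂ)) ≠ 0 := by
    intro n k hk
    have : ((n + k : ℤ) : ℂ) ≠ 0 := Int.cast_ne_zero.mpr (by omega)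
    push_cast at this; exact this
  refine ⟨μ, ?_, ?_⟩
  · intro n k hk
    have h0 := hcast n k hk
    constructor
    · field_simp
      linear_combination key_t n k hk
    · field_simp
      linear_combination key_g n k hk
  · intro n
    -- g values
    have g1 : g (1, n + 1) = - μ (-n) := by
      have := key_g (n + 1) (-n) (by omega)
      have e : n + 1 + -n = (1 : ℤ) := by ring
      rw [e] at this
      push_cast at this
      linear_combination this
    have g2 : (2 : ℂ) * g (2, n + 2) = - μ (-n) := by
      have := key_g (n + 2) (-n) (by omega)
      have e : n + 2 + -n = (2 : ℤ) := by ring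
      rw [e] at this
      push_cast at this
      linear_combination this
    have t1 : t (1, n + 1) = μ (-n) := by
      have := key_t (n + 1) (-n) (by omega)
      have e : n + 1 + -n = (1 : ℤ) := by ring
      rw [e] at this
      push_cast at this
      linear_combination this
    have t2 : (2 : ℂ) * t (2, n + 2) = μ (-n) := by
      have := key_t (n + 2) (-n) (by omega)
      have e : n + 2 + -n = (2 : ℤ) := by ring
      rw [e] at this
      push_cast at this
      linear_combination this
    have r1 := h2 (n + 1) n
    have r2 := h2 (n + 2) n
    have e1 : n + 1 - n = (1 : ℤ) := by ring
    have e2 : n + 2 - n = (2 : ℤ) := by ring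
    rw [e1] at r1; rw [e2] at r2
    push_cast at r1 r2
    have s1 := h3 n (n + 1)
    have s2 := h3 n (n + 2)
    rw [e1] at s1; rw [e2] at s2
    push_cast at s1 s2
    have R1 : (n : ℂ) * ρ₂ n + ((n : ℂ) + 1) * ρ₃ n = μ (-n) := by
      linear_combination r1 - g1
    have R2 : ((n : ℂ) + 1) * ρ₂ n + ((n : ℂ) + 2) * ρ₃ n = μ (-n) := by
      linear_combination r2 - g2
    have S1 : (n : ℂ) * θ₂ n + ((n : ℂ) + 1) * θ₃ n = μ (-n) := by
      linear_combination s1 + t1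
    have S2 : ((n : ℂ) + 1) * θ₂ n + ((n : ℂ) + 2) * θ₃ n = μ (-n) := by
      linear_combination s2 + t2
    refine ⟨?_, ?_, ?_, ?_⟩
    · linear_combination ((n : ℂ) + 1) * R2 - ((n : ℂ) + 2) * R1
    · linear_combination ((n : ℂ) + 1) * S2 - ((n : ℂ) + 2) * S1
    · linear_combination ((n : ℂ) + 1) * R1 - (n : ℂ) * R2
    · linear_combination ((n : ℂ) + 1) * S1 - (n : ℂ) * S2
end

section
/- Let L be a perfect Lie algebra over ℂ (i.e. [L, L] = L) and let f be a biderivation of L. If α belongs to the center Z(L) of L, then f(x, α) = f(α, x) = 0 for all x ∈ L. -/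
/-- Lemma 2.4: if `L` is a perfect Lie algebra over `ℂ`, `f` is a biderivation of `L` and
`α ∈ Z(L)`, then `f(x, α) = f(α, x) = 0` for all `x ∈ L`. -/
theorem stmt3 {L : Type*} [LieRing L] [LieAlgebra ℂ L]
    (hperf : Submodule.span ℂ {z : L | ∃ a b : L, z = ⁅a, b⁆} = ⊤)
    (f : L →ₗ[ℂ] L →ₗ[ℂ] L)
    (hf1 : ∀ x y z : L, f ⁅x, y⁆ z = ⁅x, f y z⁆ + ⁅f x z, y⁆)
    (hf2 : ∀ x y z : L, f x ⁅y, z⁆ = ⁅f x y, z⁆ + ⁅y, f x z⁆)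
    (α : L) (hα : α ∈ LieAlgebra.center ℂ L) :
    ∀ x : L, f x α = 0 ∧ f α x = 0 := by
  rw [LieModule.mem_maxTrivSubmodule] at hα
  have hαl : ∀ y : L, ⁅α, y⁆ = 0 := fun y => by rw [← lie_skew, hα, neg_zero]
  -- f x α is central
  have hc1 : ∀ x y : L, ⁅y, f x α⁆ = 0 := by
    intro x y
    have h := hf2 x y α
    rw [hα y, (f x).map_zero, hα (f x y)] at h
    simpa using h.symm
  have hc1' : ∀ x y : L, ⁅f x α, y⁆ = 0 := fun x y => by rw [← lie_skew, hc1, neg_zero]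
  -- f α z is central
  have hc2 : ∀ z y : L, ⁅f α z, y⁆ = 0 := by
    intro z y
    have h := hf1 α y z
    rw [hαl y, f.map_zero, hαl (f y z)] at h
    simpa using h.symm
  have hc2' : ∀ z y : L, ⁅y, f α z⁆ = 0 := fun z y => by rw [← lie_skew, hc2, neg_zero]
  intro x
  have htop : x ∈ Submodule.span ℂ {z : L | ∃ a b : L, z = ⁅a, b⁆} := by
    rw [hperf]; trivial
  constructor
  · induction htop using Submodule.span_induction with
    | mem z hz =>
      obtain ⟨a, b, rfl⟩ := hz
      rw [hf1 a b α, hc1, hc1']; simp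
    | zero => simp
    | add a b _ _ ha hb => rw [f.map_add]; simp [ha, hb]
    | smul c a _ ha => rw [f.map_smul]; simp [ha]
  · induction htop using Submodule.span_induction with
    | mem z hz =>
      obtain ⟨a, b, rfl⟩ := hz
      rw [hf2 α a b, hc2, hc2']; simp
    | zero => simp
    | add a b _ _ ha hb => rw [(f α).map_add, ha, hb]; simp
    | smul c a _ ha => rw [(f α).map_smul, ha]; simp
end

section
/- Let D be a derivation of the Lie algebra W(0,0), i.e. a linear map D : W(0,0) → W(0,0) with D([x,y]) = [D(x), y] + [x, D(y)] for all x, y. Then there exist an element u ∈ W(0,0) and complex numbers c₁, c₂, c₃ such that for all m ∈ ℤ: D(L_m) = [u, L_m] + c₂·(m − 1)·I_m + c₃·m·I_m and D(I_m) = [u, I_m] + c₁·I_m. -/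
private def stmt5deg : ℤ ⊕ ℤ → ℤ := Sum.elim id id


/-- Solutions of `(m-n) f(m+n) = m f m - n f n` over `ℂ` are affine in `m`. -/
lemma stmt5_affine (f : ℤ → ℂ)
    (hf : ∀ m n : ℤ, ((m : ℂ) - (n : ℂ)) * f (m + n) = (m : ℂ) * f m - (n : ℂ) * f n) :
    ∀ m : ℤ, f m = f 0 + (m : ℂ) * (f 1 - f 0) := by
  set g : ℤ → ℂ := fun m => f m - f 0 - (m : ℂ) * (f 1 - f 0) with hgdef
  have hg : ∀ m n : ℤ, ((m : ℂ) - (n : ℂ)) * g (m + n) = (m : ℂ) * g m - (n : ℂ) * g n := by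
    intro m n
    simp only [hgdef]
    push_cast
    linear_combination hf m n
  have h0 : g 0 = 0 := by simp [hgdef]
  have h1 : g 1 = 0 := by simp [hgdef]
  have hm1 : g (-1) = 0 := by
    have e := hg 1 (-1); push_cast at e; norm_num at e
    linear_combination -e + 2*h0 - h1
  have h2 : g 2 = 0 := by
    have e1 := hg 2 1; push_cast at e1; norm_num at e1
    have e2 := hg 3 (-1); push_cast at e2; norm_num at e2
    -- e1 : g 3 = 2 * g 2 - g 1 ; e2 : 4 * g 2 = 3 * g 3 + g (-1)
    linear_combination (-3/2) * e1 + (-1/2) * e2 + (3/2) * h1 + (-1/2) * hm1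
  have h3 : g 3 = 0 := by
    have e1 := hg 2 1; push_cast at e1; norm_num at e1
    linear_combination e1 + 2 * h2 - h1
  have hm2 : g (-2) = 0 := by
    have e1 := hg (-3) 1; push_cast at e1; norm_num at e1
    have e2 := hg (-2) (-1); push_cast at e2; norm_num at e2
    -- e1 : -4 g(-2) = -3 g(-3) - g 1 ; e2 : -(g (-3)) = -2 g(-2) + g(-1)
    linear_combination (1/2) * e1 + (3/2) * e2 - (1/2) * h1 + (3/2) * hm1
  have hup : ∀ m : ℤ, 2 ≤ m → g m = 0 := by
    intro m hm
    refine Int.le_induction (motive := fun n _ => g n = 0) h2 (fun n hn ih => ?_) m hm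
    have e := hg n 1
    rw [ih, h1] at e
    have hne : ((n : ℂ) - 1) ≠ 0 := by
      rw [sub_ne_zero]
      exact_mod_cast (by omega : n ≠ 1)
    have := mul_eq_zero.mp (by linear_combination e : ((n:ℂ) - 1) * g (n+1) = 0)
    tauto
  have hdown : ∀ k : ℕ, g (-2 - k) = 0 := by
    intro k
    induction k with
    | zero => simpa using hm2
    | succ k ih =>
      have e := hg (-2 - k) (-1)
      rw [ih, hm1] at e
      push_cast at e
      have hne : ((-2 - (k:ℂ)) + 1) ≠ 0 := by
        intro h
        have : (k : ℂ) = -1 := by linear_combination -h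
        have : (k : ℂ) ≠ -1 := by
          intro h2
          have : ((k : ℤ) : ℂ) = ((-1 : ℤ) : ℂ) := by push_cast; linear_combination h2
          have := Int.cast_injective (α := ℂ) this
          omega
        exact this ‹_›
      have key : ((-2 - (k:ℂ)) + 1) * g (-2 - k + -1) = 0 := by linear_combination e
      have := mul_eq_zero.mp key
      have h3 : g (-2 - k + -1) = 0 := by tauto
      have : (-2 - (k:ℤ) + -1) = (-2 - ((k:ℤ)+1)) := by ring
      rw [this] at h3
      exact_mod_cast h3
  intro m
  have hgm : g m = 0 := by
    rcases le_or_gt 2 m with h | h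
    · exact hup m h
    rcases le_or_gt m (-2) with h' | h'
    · have : m = -2 - ((-2 - m).toNat : ℤ) := by omega
      rw [this]
      exact hdown _
    · interval_cases m
      · exact hm1
      · exact h0
      · exact h1
  simp only [hgdef] at hgm
  linear_combination hgm


/-- Solutions of `(m-n)(f(m+n) - f m - f n) = 0` over `ℂ` with `f 0 = 0` are linear. -/
lemma stmt5_linear (f : ℤ → ℂ) (h0 : f 0 = 0)
    (hf : ∀ m n : ℤ, ((m : ℂ) - (n : ℂ)) * f (m + n) = ((m : ℂ) - (n : ℂ)) * (f m + f n)) :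
    ∀ m : ℤ, f m = (m : ℂ) * f 1 := by
  have add : ∀ m n : ℤ, m ≠ n → f (m + n) = f m + f n := by
    intro m n hmn
    have hne : ((m : ℂ) - (n : ℂ)) ≠ 0 := by
      rw [sub_ne_zero]
      exact_mod_cast hmn
    exact mul_left_cancel₀ hne (hf m n)
  have h3 : f 3 = f 1 + f 2 := by simpa using add 1 2 (by omega)
  have h4 : f 4 = f 1 + f 3 := by simpa using add 1 3 (by omega)
  have h5 : f 5 = f 2 + f 3 := by simpa using add 2 3 (by omega)
  have h5' : f 5 = f 1 + f 4 := by simpa using add 1 4 (by omega)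
  have h2 : f 2 = 2 * f 1 := by linear_combination -h5 + h5' + h4
  have succ : ∀ m : ℤ, f (m + 1) = f m + f 1 := by
    intro m
    rcases eq_or_ne m 1 with rfl | hm
    · norm_num [h2]; ring
    · exact add m 1 hm
  intro m
  induction m using Int.induction_on with
  | zero => simpa using h0
  | succ k ih => push_cast; rw [succ k, ih]; push_cast; ring
  | pred k ih =>
    have := succ (-(k : ℤ) - 1)
    norm_num at this
    push_cast
    rw [show f (-(k:ℤ) - 1) = f (-(k:ℤ)) - f 1 by linear_combination -this]
    rw [ih]
    push_cast; ring




/-- Lemma 3.3 (Shen–Jiang): every derivation of the Lie algebra `W(0,0)` is the sum of an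
inner derivation and a linear combination of the outer derivations `D₁, D₂^{0,0}, D₃`. -/
theorem stmt5 {W : Type*} [LieRing W] [LieAlgebra ℂ W]
    (b : Module.Basis (ℤ ⊕ ℤ) ℂ W) (L I : ℤ → W)
    (hL : ∀ n : ℤ, L n = b (Sum.inl n))
    (hI : ∀ n : ℤ, I n = b (Sum.inr n))
    (hLL : ∀ m n : ℤ, ⁅L m, L n⁆ = ((m : ℂ) - (n : ℂ)) • L (m + n))
    (hLI : ∀ m n : ℤ, ⁅L m, I n⁆ = (-(n : ℂ)) • I (m + n))
    (hII : ∀ m n : ℤ, ⁅I m, I n⁆ = 0)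
    (D : W →ₗ[ℂ] W)
    (hD : ∀ x y : W, D ⁅x, y⁆ = ⁅D x, y⁆ + ⁅x, D y⁆) :
    ∃ (u : W) (c₁ c₂ c₃ : ℂ), ∀ m : ℤ,
      D (L m) = ⁅u, L m⁆ + (c₂ * ((m : ℂ) - 1)) • I m + (c₃ * (m : ℂ)) • I m ∧
      D (I m) = ⁅u, I m⁆ + c₁ • I m := by
  -- key coordinate lemma for ad (L 0)
  have key : ∀ (x : W) (i : ℤ ⊕ ℤ),
      b.repr ⁅L 0, x⁆ i = (-(stmt5deg i : ℂ)) * b.repr x i := by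
    intro x i
    have hmaps : (Finsupp.lapply i ∘ₗ b.repr.toLinearMap ∘ₗ (LieAlgebra.ad ℂ W (L 0) : W →ₗ[ℂ] W))
        = (-(stmt5deg i : ℂ)) • (Finsupp.lapply i ∘ₗ b.repr.toLinearMap) := by
      apply b.ext
      intro j
      rcases j with n | n
      · simp only [LinearMap.comp_apply, LieAlgebra.ad_apply, LinearMap.smul_apply,
          Finsupp.lapply_apply, smul_eq_mul]
        rw [← hL, hLL, zero_add, hL]
        simp only [map_smul, LinearEquiv.coe_coe, Finsupp.smul_apply, Module.Basis.repr_self, smul_eq_mul,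
          Finsupp.single_apply]
        rcases eq_or_ne (Sum.inl n : ℤ ⊕ ℤ) i with rfl | hne
        · simp [stmt5deg]
        · rw [if_neg hne]; ring
      · simp only [LinearMap.comp_apply, LieAlgebra.ad_apply, LinearMap.smul_apply,
          Finsupp.lapply_apply, smul_eq_mul]
        rw [← hI, hLI, zero_add, hI]
        simp only [map_smul, LinearEquiv.coe_coe, Finsupp.smul_apply, Module.Basis.repr_self, smul_eq_mul,
          Finsupp.single_apply]
        rcases eq_or_ne (Sum.inr n : ℤ ⊕ ℤ) i with rfl | hne
        · simp [stmt5deg]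
        · rw [if_neg hne]; ring
    have := DFunLike.congr_fun hmaps x
    simpa using this
  have key2 : ∀ (x : W) (i : ℤ ⊕ ℤ),
      b.repr ⁅x, L 0⁆ i = ((stmt5deg i : ℂ)) * b.repr x i := by
    intro x i
    rw [← lie_skew, map_neg, Finsupp.neg_apply, key]
    ring
  -- misc bracket lemma
  have hIL : ∀ m n : ℤ, ⁅I m, L n⁆ = ((m : ℂ)) • I (m + n) := by
    intro m n
    rw [← lie_skew, hLI n m, add_comm n m]
    simp
  -- construct u₀
  set c : (ℤ ⊕ ℤ) →₀ ℂ := b.repr (D (L 0)) with hcdef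
  set g0 : (ℤ ⊕ ℤ) →₀ ℂ := Finsupp.onFinset c.support
    (fun i => if stmt5deg i = 0 then 0 else c i / (stmt5deg i : ℂ))
    (by
      intro i h
      simp only [ne_eq] at h
      by_contra hmem
      rw [Finsupp.notMem_support_iff.1 hmem] at h
      simp at h) with hg0def
  set u0 : W := b.repr.symm g0 with hu0def
  have hru0 : ∀ i, b.repr u0 i = if stmt5deg i = 0 then 0 else c i / (stmt5deg i : ℂ) := by
    intro i
    rw [hu0def, b.repr.apply_symm_apply, hg0def, Finsupp.onFinset_apply]
  have hu0L0 : ∀ i, b.repr ⁅u0, L 0⁆ i = if stmt5deg i = 0 then 0 else c i := by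
    intro i
    rw [key2, hru0]
    rcases eq_or_ne (stmt5deg i) 0 with h | h
    · simp [h]
    · rw [if_neg h, if_neg h, mul_div_assoc']
      exact mul_div_cancel_left₀ _ (Int.cast_ne_zero.mpr h)
  -- E := D - ad u₀
    -- as a bare function
  set E : W → W := fun x => D x - ⁅u0, x⁆ with hEdef
  have hEsmul : ∀ (r : ℂ) (x : W), E (r • x) = r • E x := by
    intro r x
    simp only [hEdef, map_smul, lie_smul, smul_sub]
  have hED : ∀ x y : W, E ⁅x, y⁆ = ⁅E x, y⁆ + ⁅x, E y⁆ := by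
    intro x y
    simp only [hEdef, sub_lie, lie_sub, hD x y, leibniz_lie u0 x y]
    abel
  have hrE : ∀ (x : W) (i), b.repr (E x) i = b.repr (D x) i - b.repr ⁅u0, x⁆ i := by
    intro x i
    simp [hEdef]
  have hrEL0 : ∀ i, b.repr (E (L 0)) i = if stmt5deg i = 0 then c i else 0 := by
    intro i
    rw [hrE, hu0L0, hcdef]
    rcases eq_or_ne (stmt5deg i) 0 with h | h <;> simp [h]
  -- decomposition lemma
  have decomp : ∀ (x : W) (m : ℤ), (∀ i, stmt5deg i ≠ m → b.repr x i = 0) →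
      x = (b.repr x (Sum.inl m)) • L m + (b.repr x (Sum.inr m)) • I m := by
    intro x m h
    apply b.repr.injective
    ext i
    rw [map_add, map_smul, map_smul, hL, hI, Module.Basis.repr_self, Module.Basis.repr_self,
      Finsupp.add_apply, Finsupp.smul_apply, Finsupp.smul_apply, Finsupp.single_apply,
      Finsupp.single_apply]
    rcases i with n | n <;> rcases eq_or_ne n m with rfl | hn
    · simp
    · rw [if_neg (by simpa using (Ne.symm hn)), if_neg (by simp)]
      simpa using h (Sum.inl n) (by simpa [stmt5deg] using hn)
    · simp
    · rw [if_neg (by simp), if_neg (by simpa using (Ne.symm hn))]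
      simpa using h (Sum.inr n) (by simpa [stmt5deg] using hn)
  -- repr of basis vectors
  have rLl : ∀ k n : ℤ, b.repr (L k) (Sum.inl n) = if k = n then 1 else 0 := by
    intro k n
    rw [hL, Module.Basis.repr_self, Finsupp.single_apply]
    simp
  have rLr : ∀ k n : ℤ, b.repr (L k) (Sum.inr n) = 0 := by
    intro k n
    rw [hL, Module.Basis.repr_self, Finsupp.single_apply]
    simp
  have rIl : ∀ k n : ℤ, b.repr (I k) (Sum.inl n) = 0 := by
    intro k n
    rw [hI, Module.Basis.repr_self, Finsupp.single_apply]
    simp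
  have rIr : ∀ k n : ℤ, b.repr (I k) (Sum.inr n) = if k = n then 1 else 0 := by
    intro k n
    rw [hI, Module.Basis.repr_self, Finsupp.single_apply]
    simp
  -- E (L 0)
  have hEL0 : E (L 0) = (c (Sum.inl 0)) • L 0 + (c (Sum.inr 0)) • I 0 := by
    have h := decomp (E (L 0)) 0 (fun i hi => by rw [hrEL0]; exact if_neg hi)
    rw [hrEL0, hrEL0] at h
    simpa [stmt5deg] using h
  -- bracket of L 0 with E (L m)
  have hbrL : ∀ m : ℤ, ⁅L 0, E (L m)⁆
      = (-(m : ℂ)) • E (L m) + ((m : ℂ) * c (Sum.inl 0)) • L m := by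
    intro m
    have h1 := hED (L 0) (L m)
    rw [hLL 0 m, zero_add, hEsmul, hEL0, add_lie, smul_lie, smul_lie, hLL 0 m, zero_add,
      hIL 0 m, zero_add] at h1
    push_cast at h1 ⊢
    linear_combination (norm := module) -h1
  -- c (inl 0) = 0
  have hc0 : c (Sum.inl 0) = 0 := by
    have h2 := congrArg (fun z => b.repr z (Sum.inl 1)) (hbrL 1)
    simp only [key, map_add, map_smul, Finsupp.add_apply, Finsupp.smul_apply,
      smul_eq_mul, rLl, stmt5deg, Sum.elim_inl, id_eq] at h2
    norm_num at h2
    linear_combination h2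
  have hbrL' : ∀ m : ℤ, ⁅L 0, E (L m)⁆ = (-(m : ℂ)) • E (L m) := by
    intro m
    rw [hbrL m, hc0]
    simp
  -- bracket of L 0 with E (I m)
  have hbrI : ∀ m : ℤ, ⁅L 0, E (I m)⁆ = (-(m : ℂ)) • E (I m) := by
    intro m
    have h1 := hED (L 0) (I m)
    rw [hLI 0 m, zero_add, hEsmul, hEL0, add_lie, smul_lie, smul_lie, hLI 0 m, zero_add,
      hII 0 m, hc0] at h1
    simp only [zero_smul, smul_zero, add_zero, zero_add] at h1
    linear_combination (norm := module) -h1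
  -- vanishing of off-diagonal coefficients
  have vanish : ∀ (x : W) (m : ℤ), ⁅L 0, x⁆ = (-(m : ℂ)) • x →
      ∀ i, stmt5deg i ≠ m → b.repr x i = 0 := by
    intro x m hx i hi
    have h2 := congrArg (fun z => b.repr z i) hx
    simp only [key, map_smul, Finsupp.smul_apply, smul_eq_mul] at h2
    have hne : (-(stmt5deg i : ℂ)) - (-(m : ℂ)) ≠ 0 := by
      intro h
      apply hi
      have : ((stmt5deg i : ℤ) : ℂ) = ((m : ℤ) : ℂ) := by linear_combination -h
      exact_mod_cast this
    have : ((-(stmt5deg i : ℂ)) - (-(m : ℂ))) * b.repr x i = 0 := by linear_combination h2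
    rcases mul_eq_zero.mp this with h | h
    · exact absurd h hne
    · exact h
  -- diagonal decompositions
  set al : ℤ → ℂ := fun m => b.repr (E (L m)) (Sum.inl m) with haldef
  set be : ℤ → ℂ := fun m => b.repr (E (L m)) (Sum.inr m) with hbedef
  set ga : ℤ → ℂ := fun m => b.repr (E (I m)) (Sum.inl m) with hgadef
  set de : ℤ → ℂ := fun m => b.repr (E (I m)) (Sum.inr m) with hdedef
  have hELm : ∀ m : ℤ, E (L m) = al m • L m + be m • I m := by
    intro m
    exact decomp (E (L m)) m (vanish (E (L m)) m (hbrL' m))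
  have hEIm : ∀ m : ℤ, E (I m) = ga m • L m + de m • I m := by
    intro m
    exact decomp (E (I m)) m (vanish (E (I m)) m (hbrI m))
  have hE0 : E (0 : W) = 0 := by simp [hEdef]
  -- scalar equations
  have E12 : ∀ m n : ℤ, (((m:ℂ)-(n:ℂ)) * al (m+n) = ((m:ℂ)-(n:ℂ)) * (al m + al n))
      ∧ (((m:ℂ)-(n:ℂ)) * be (m+n) = (m:ℂ) * be m - (n:ℂ) * be n) := by
    intro m n
    have h := hED (L m) (L n)
    rw [hLL m n, hEsmul, hELm (m+n), hELm m, hELm n, add_lie, smul_lie, smul_lie,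
      lie_add, lie_smul, lie_smul, hLL m n, hIL m n, hLI m n] at h
    constructor
    · have hv := congrArg (fun z => b.repr z (Sum.inl (m+n))) h
      simp only [map_add, map_smul, Finsupp.add_apply, Finsupp.smul_apply, smul_eq_mul,
        rLl, rLr, rIl, rIr, if_pos rfl, eq_self_iff_true, if_true] at hv
      linear_combination hv
    · have hv := congrArg (fun z => b.repr z (Sum.inr (m+n))) h
      simp only [map_add, map_smul, Finsupp.add_apply, Finsupp.smul_apply, smul_eq_mul,
        rLl, rLr, rIl, rIr, if_pos rfl, eq_self_iff_true, if_true] at hv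
      linear_combination hv
  have E34 : ∀ m n : ℤ, ((-(n:ℂ)) * ga (m+n) = ((m:ℂ)-(n:ℂ)) * ga n)
      ∧ ((-(n:ℂ)) * de (m+n) = (-(n:ℂ)) * (al m + de n)) := by
    intro m n
    have h := hED (L m) (I n)
    rw [hLI m n, hEsmul, hEIm (m+n), hELm m, hEIm n, add_lie, smul_lie, smul_lie,
      lie_add, lie_smul, lie_smul, hLI m n, hII m n, hLL m n] at h
    constructor
    · have hv := congrArg (fun z => b.repr z (Sum.inl (m+n))) h
      simp only [map_add, map_smul, Finsupp.add_apply, Finsupp.smul_apply, smul_eq_mul,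
        rLl, rLr, rIl, rIr, if_pos rfl, eq_self_iff_true, if_true, smul_zero, map_zero, Finsupp.coe_zero,
        Pi.zero_apply] at hv
      linear_combination hv
    · have hv := congrArg (fun z => b.repr z (Sum.inr (m+n))) h
      simp only [map_add, map_smul, Finsupp.add_apply, Finsupp.smul_apply, smul_eq_mul,
        rLl, rLr, rIl, rIr, if_pos rfl, eq_self_iff_true, if_true, smul_zero, map_zero, Finsupp.coe_zero,
        Pi.zero_apply] at hv
      linear_combination hv
  have E5 : ∀ m n : ℤ, (-(n:ℂ)) * ga m + (m:ℂ) * ga n = 0 := by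
    intro m n
    have h := hED (I m) (I n)
    rw [hII m n, hE0, hEIm m, hEIm n, add_lie, smul_lie, smul_lie,
      lie_add, lie_smul, lie_smul, hLI m n, hII m n, hIL m n] at h
    have hv := congrArg (fun z => b.repr z (Sum.inr (m+n))) h
    simp only [map_add, map_smul, Finsupp.add_apply, Finsupp.smul_apply, smul_eq_mul,
      rLl, rLr, rIl, rIr, if_pos rfl, eq_self_iff_true, if_true, smul_zero, map_zero, Finsupp.coe_zero,
      Pi.zero_apply] at hv
    linear_combination -hv
  -- solve the scalar equations
  have hal0 : al 0 = 0 := by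
    simp only [haldef]
    rw [hrEL0]
    simpa [stmt5deg] using hc0
  have hal : ∀ m : ℤ, al m = (m : ℂ) * al 1 := stmt5_linear al hal0 (fun m n => (E12 m n).1)
  have hbe : ∀ m : ℤ, be m = be 0 + (m : ℂ) * (be 1 - be 0) :=
    stmt5_affine be (fun m n => (E12 m n).2)
  have hga : ∀ m : ℤ, ga m = 0 := by
    have h2 : ga 2 = 0 := by
      have h := (E34 1 1).1
      norm_num at h
      exact h
    have h1 : ga 1 = 0 := by
      have h := E5 1 2
      norm_num [h2] at h
      exact h
    intro m
    have h := E5 1 m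
    rw [h1] at h
    norm_num at h
    exact h
  have hde : ∀ k : ℤ, de k = ((k:ℂ) - 1) * al 1 + de 1 := by
    intro k
    have h := (E34 (k-1) 1).2
    rw [show k - 1 + 1 = k from by ring] at h
    have h2 := hal (k-1)
    push_cast at h h2
    linear_combination -h + h2
  -- assemble
  refine ⟨u0 - (al 1) • L 0, de 1 - al 1, -(be 0), be 1, fun m => ⟨?_, ?_⟩⟩
  · have hDx : D (L m) = E (L m) + ⁅u0, L m⁆ := by simp [hEdef]
    rw [hDx, hELm m, hal m, hbe m, sub_lie, smul_lie, hLL 0 m, zero_add]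
    push_cast
    module
  · have hDx : D (I m) = E (I m) + ⁅u0, I m⁆ := by simp [hEdef]
    rw [hDx, hEIm m, hga m, hde m, sub_lie, smul_lie, hLI 0 m, zero_add]
    push_cast
    module
end

section
/- Let f be a biderivation of the Lie algebra W(0,0). Then there exist linear maps φ, ψ : W(0,0) → W(0,0) and linear functionals ρ₁, ρ₂, ρ₃, θ₁, θ₂, θ₃ : W(0,0) → ℂ such that for all x, y ∈ W(0,0): f(x, y) = ρ₁(x)·D₁(y) + ρ₂(x)·D₂(y) + ρ₃(x)·D₃(y) + [φ(x), y] and also f(x, y) = θ₁(y)·D₁(x) + θ₂(y)·D₂(x) + θ₃(y)·D₃(x) + [x, ψ(y)], where D₁, D₂, D₃ are the linear maps on W(0,0) determined on the basis by D₁(L_m) = 0, D₁(I_m) = I_m, D₂(L_m) = (m − 1)·I_m, D₂(I_m) = 0, D₃(L_m) = m·I_m, D₃(I_m) = 0 for all m ∈ ℤ. -/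
set_option maxHeartbeats 2000000

section aux
variable {W : Type*} [LieRing W] [LieAlgebra ℂ W]
    (b : Module.Basis (ℤ ⊕ ℤ) ℂ W) (L I : ℤ → W)
    (hL : ∀ n : ℤ, L n = b (Sum.inl n))
    (hI : ∀ n : ℤ, I n = b (Sum.inr n))
    (hLL : ∀ m n : ℤ, ⁅L m, L n⁆ = ((m : ℂ) - (n : ℂ)) • L (m + n))
    (hLI : ∀ m n : ℤ, ⁅L m, I n⁆ = (-(n : ℂ)) • I (m + n))
    (hII : ∀ m n : ℤ, ⁅I m, I n⁆ = 0)

include hL in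
lemma cLL (m n : ℤ) : b.repr (L n) (Sum.inl m) = if n = m then 1 else 0 := by
  simp [hL, Module.Basis.repr_self, Finsupp.single_apply]

include hI in
lemma cLI (m n : ℤ) : b.repr (I n) (Sum.inl m) = 0 := by
  simp [hI, Module.Basis.repr_self, Finsupp.single_apply]

include hL in
lemma cIL (m n : ℤ) : b.repr (L n) (Sum.inr m) = 0 := by
  simp [hL, Module.Basis.repr_self, Finsupp.single_apply]

include hI in
lemma cII (m n : ℤ) : b.repr (I n) (Sum.inr m) = if n = m then 1 else 0 := by
  simp [hI, Module.Basis.repr_self, Finsupp.single_apply]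

include hL hI hLL hLI in
lemma brLL (k m : ℤ) (x : W) :
    b.repr ⁅L k, x⁆ (Sum.inl m) = (2*(k:ℂ) - m) * b.repr x (Sum.inl (m - k)) := by
  have h : ((b.coord (Sum.inl m)).comp ((LieAlgebra.ad ℂ W) (L k) : W →ₗ[ℂ] W))
      = (2*(k:ℂ) - m) • (b.coord (Sum.inl (m - k))) := by
    apply b.ext
    rintro (n | n) <;>
      simp only [LinearMap.comp_apply, LinearMap.smul_apply, LieAlgebra.ad_apply,
        Module.Basis.coord_apply, smul_eq_mul]
    · rw [← hL n, hLL k n, map_smul, Finsupp.smul_apply,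
        cLL b L hL, cLL b L hL, smul_eq_mul]
      rcases eq_or_ne n (m - k) with rfl | hn
      · rw [if_pos (by omega), if_pos rfl]; push_cast; ring
      · rw [if_neg (by omega), if_neg hn]; ring
    · rw [← hI n, hLI k n, map_smul, Finsupp.smul_apply,
        cLI b I hI, cLI b I hI, smul_eq_mul]; ring
  have := LinearMap.congr_fun h x
  simpa [Module.Basis.coord_apply] using this

include hL hI hLL hLI in
lemma brIL (k m : ℤ) (x : W) :
    b.repr ⁅L k, x⁆ (Sum.inr m) = ((k:ℂ) - m) * b.repr x (Sum.inr (m - k)) := by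
  have h : ((b.coord (Sum.inr m)).comp ((LieAlgebra.ad ℂ W) (L k) : W →ₗ[ℂ] W))
      = ((k:ℂ) - m) • (b.coord (Sum.inr (m - k))) := by
    apply b.ext
    rintro (n | n) <;>
      simp only [LinearMap.comp_apply, LinearMap.smul_apply, LieAlgebra.ad_apply,
        Module.Basis.coord_apply, smul_eq_mul]
    · rw [← hL n, hLL k n, map_smul, Finsupp.smul_apply,
        cIL b L hL, cIL b L hL, smul_eq_mul]; ring
    · rw [← hI n, hLI k n, map_smul, Finsupp.smul_apply,
        cII b I hI, cII b I hI, smul_eq_mul]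
      rcases eq_or_ne n (m - k) with rfl | hn
      · rw [if_pos (by omega), if_pos rfl]; push_cast; ring
      · rw [if_neg (by omega), if_neg hn]; ring
  have := LinearMap.congr_fun h x
  simpa [Module.Basis.coord_apply] using this

include hL hI hLI hII in
lemma brLI (k m : ℤ) (x : W) :
    b.repr ⁅I k, x⁆ (Sum.inl m) = 0 := by
  have h : ((b.coord (Sum.inl m)).comp ((LieAlgebra.ad ℂ W) (I k) : W →ₗ[ℂ] W))
      = (0 : W →ₗ[ℂ] ℂ) := by
    apply b.ext
    rintro (n | n) <;>
      simp only [LinearMap.comp_apply, LieAlgebra.ad_apply,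
        Module.Basis.coord_apply, LinearMap.zero_apply]
    · rw [← hL n, ← lie_skew, hLI n k]
      simp [cLI b I hI]
    · rw [← hI n, hII k n]; simp
  have := LinearMap.congr_fun h x
  simpa [Module.Basis.coord_apply] using this

include hL hI hLI hII in
lemma brII (k m : ℤ) (x : W) :
    b.repr ⁅I k, x⁆ (Sum.inr m) = (k:ℂ) * b.repr x (Sum.inl (m - k)) := by
  have h : ((b.coord (Sum.inr m)).comp ((LieAlgebra.ad ℂ W) (I k) : W →ₗ[ℂ] W))
      = ((k:ℂ)) • (b.coord (Sum.inl (m - k))) := by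
    apply b.ext
    rintro (n | n) <;>
      simp only [LinearMap.comp_apply, LieAlgebra.ad_apply,
        Module.Basis.coord_apply, LinearMap.smul_apply, smul_eq_mul]
    · rw [← hL n, ← lie_skew, hLI n k]
      simp only [map_neg, map_smul, Finsupp.neg_apply, Finsupp.smul_apply,
        cII b I hI, cLL b L hL, smul_eq_mul]
      rcases eq_or_ne n (m - k) with rfl | hn
      · rw [if_pos (by omega), if_pos rfl]; ring
      · rw [if_neg (by omega), if_neg hn]; ring
    · rw [← hI n, hII k n]
      simp [cLI b I hI]
  have := LinearMap.congr_fun h x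
  simpa [Module.Basis.coord_apply] using this

include hL hI hLI hII in
lemma brLIr (k m : ℤ) (x : W) :
    b.repr ⁅x, I k⁆ (Sum.inl m) = 0 := by
  rw [← lie_skew, map_neg, Finsupp.neg_apply, brLI b L I hL hI hLI hII, neg_zero]

include hL hI hLI hII in
lemma brIIr (k m : ℤ) (x : W) :
    b.repr ⁅x, I k⁆ (Sum.inr m) = -(k:ℂ) * b.repr x (Sum.inl (m - k)) := by
  rw [← lie_skew, map_neg, Finsupp.neg_apply, brII b L I hL hI hLI hII]; ring

end aux

section aux2
variable {W : Type*} [LieRing W] [LieAlgebra ℂ W]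
    (b : Module.Basis (ℤ ⊕ ℤ) ℂ W) (L I : ℤ → W)
    (hL : ∀ n : ℤ, L n = b (Sum.inl n))
    (hI : ∀ n : ℤ, I n = b (Sum.inr n))
    (brLL' : ∀ (k m : ℤ) (x : W),
      b.repr ⁅L k, x⁆ (Sum.inl m) = (2*(k:ℂ) - m) * b.repr x (Sum.inl (m - k)))
    (brIL' : ∀ (k m : ℤ) (x : W),
      b.repr ⁅L k, x⁆ (Sum.inr m) = ((k:ℂ) - m) * b.repr x (Sum.inr (m - k)))

include hL hI brLL' brIL' in
lemma eig (n : ℤ) (v : W) (h : ⁅L 0, v⁆ = (-(n:ℂ)) • v) :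
    v = b.repr v (Sum.inl n) • L n + b.repr v (Sum.inr n) • I n := by
  have hcl : ∀ m : ℤ, m ≠ n → b.repr v (Sum.inl m) = 0 := by
    intro m hm
    have h1 := brLL' 0 m v
    rw [h, map_smul, Finsupp.smul_apply, smul_eq_mul, sub_zero] at h1
    push_cast at h1
    have h2 : ((m:ℂ) - n) * b.repr v (Sum.inl m) = 0 := by linear_combination h1
    have h3 : ((m:ℂ) - n) ≠ 0 := sub_ne_zero.mpr (by exact_mod_cast hm)
    exact (mul_eq_zero.mp h2).resolve_left h3
  have hci : ∀ m : ℤ, m ≠ n → b.repr v (Sum.inr m) = 0 := by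
    intro m hm
    have h1 := brIL' 0 m v
    rw [h, map_smul, Finsupp.smul_apply, smul_eq_mul, sub_zero] at h1
    push_cast at h1
    have h2 : ((m:ℂ) - n) * b.repr v (Sum.inr m) = 0 := by linear_combination h1
    have h3 : ((m:ℂ) - n) ≠ 0 := sub_ne_zero.mpr (by exact_mod_cast hm)
    exact (mul_eq_zero.mp h2).resolve_left h3
  apply b.repr.injective
  ext j
  rcases j with m | m <;>
    simp only [map_add, map_smul, Finsupp.add_apply, Finsupp.smul_apply, smul_eq_mul,
      hL, hI, Module.Basis.repr_self, Finsupp.single_apply]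
  · rcases eq_or_ne m n with rfl | hm
    · simp
    · rw [hcl m hm]
      simp [Finsupp.single_apply, Ne.symm hm]
  · rcases eq_or_ne m n with rfl | hm
    · simp
    · rw [hci m hm]
      simp [Finsupp.single_apply, Ne.symm hm]

include hL hI brLL' brIL' in
lemma exists_u (w : W) : ∃ u : W, b.repr u (Sum.inr 0) = 0 ∧
    ⁅u, L 0⁆ = w - b.repr w (Sum.inl 0) • L 0 - b.repr w (Sum.inr 0) • I 0 := by
  classical
  set md : ℤ ⊕ ℤ → ℤ := Sum.elim id id with hmd
  set U : (ℤ ⊕ ℤ) →₀ ℂ := (b.repr w).sum fun i t => Finsupp.single i (t / (md i : ℂ)) with hU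
  have hUj : ∀ j, U j = b.repr w j / (md j : ℂ) := by
    intro j
    rw [hU, Finsupp.sum_apply]
    simp only [Finsupp.sum, Finsupp.single_apply]
    rw [Finset.sum_ite_eq' (b.repr w).support j (fun i => b.repr w i / (md i : ℂ))]
    split_ifs with hj
    · rfl
    · rw [Finsupp.notMem_support_iff.mp hj, zero_div]
  have hrepru : ∀ j, b.repr (b.repr.symm U) j = b.repr w j / (md j : ℂ) := by
    intro j; rw [LinearEquiv.apply_symm_apply]; exact hUj j
  refine ⟨b.repr.symm U, ?_, ?_⟩
  · rw [hrepru]; simp [hmd]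
  · apply b.repr.injective
    ext j
    have hskew : ⁅b.repr.symm U, L 0⁆ = -⁅L 0, b.repr.symm U⁆ := (lie_skew _ _).symm
    rcases j with m | m
    · rw [hskew, map_neg, Finsupp.neg_apply, brLL' 0 m, sub_zero, hrepru]
      simp only [hmd, Sum.elim_inl, id, map_sub, map_smul, Finsupp.sub_apply,
        Finsupp.smul_apply, smul_eq_mul, hL, hI, Module.Basis.repr_self, Finsupp.single_apply]
      rcases eq_or_ne m 0 with rfl | hm
      · simp
      · have hmc : (m:ℂ) ≠ 0 := Int.cast_ne_zero.mpr hm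
        rw [if_neg (show ¬ (Sum.inl (0:ℤ) = Sum.inl m) by simp [Ne.symm hm]),
          if_neg (show ¬ ((Sum.inr (0:ℤ) : ℤ ⊕ ℤ) = Sum.inl m) by simp)]
        push_cast
        field_simp
        ring
    · rw [hskew, map_neg, Finsupp.neg_apply, brIL' 0 m, sub_zero, hrepru]
      simp only [hmd, Sum.elim_inr, id, map_sub, map_smul, Finsupp.sub_apply,
        Finsupp.smul_apply, smul_eq_mul, hL, hI, Module.Basis.repr_self, Finsupp.single_apply]
      rcases eq_or_ne m 0 with rfl | hm
      · simp
      · have hmc : (m:ℂ) ≠ 0 := Int.cast_ne_zero.mpr hm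
        rw [if_neg (show ¬ ((Sum.inr (0:ℤ) : ℤ ⊕ ℤ) = Sum.inr m) by simp [Ne.symm hm]),
          if_neg (show ¬ ((Sum.inl (0:ℤ) : ℤ ⊕ ℤ) = Sum.inr m) by simp)]
        push_cast
        field_simp
        ring
end aux2

section aux3
variable {W : Type*} [LieRing W] [LieAlgebra ℂ W]
    (b : Module.Basis (ℤ ⊕ ℤ) ℂ W) (L I : ℤ → W)
    (hL : ∀ n : ℤ, L n = b (Sum.inl n))
    (hI : ∀ n : ℤ, I n = b (Sum.inr n))
    (hLL : ∀ m n : ℤ, ⁅L m, L n⁆ = ((m : ℂ) - (n : ℂ)) • L (m + n))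
    (hLI : ∀ m n : ℤ, ⁅L m, I n⁆ = (-(n : ℂ)) • I (m + n))
    (hII : ∀ m n : ℤ, ⁅I m, I n⁆ = 0)
    (cLL' : ∀ m n : ℤ, b.repr (L n) (Sum.inl m) = if n = m then 1 else 0)
    (cLI' : ∀ m n : ℤ, b.repr (I n) (Sum.inl m) = 0)
    (cIL' : ∀ m n : ℤ, b.repr (L n) (Sum.inr m) = 0)
    (cII' : ∀ m n : ℤ, b.repr (I n) (Sum.inr m) = if n = m then 1 else 0)
    (brLL' : ∀ (k m : ℤ) (x : W),
      b.repr ⁅L k, x⁆ (Sum.inl m) = (2*(k:ℂ) - m) * b.repr x (Sum.inl (m - k)))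
    (brIL' : ∀ (k m : ℤ) (x : W),
      b.repr ⁅L k, x⁆ (Sum.inr m) = ((k:ℂ) - m) * b.repr x (Sum.inr (m - k)))
    (eig' : ∀ (n : ℤ) (v : W), ⁅L 0, v⁆ = (-(n:ℂ)) • v →
      v = b.repr v (Sum.inl n) • L n + b.repr v (Sum.inr n) • I n)
    (exists_u' : ∀ w : W, ∃ u : W, b.repr u (Sum.inr 0) = 0 ∧
      ⁅u, L 0⁆ = w - b.repr w (Sum.inl 0) • L 0 - b.repr w (Sum.inr 0) • I 0)
    (D₁ D₂ D₃ : W →ₗ[ℂ] W)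
    (hD₁ : ∀ m : ℤ, D₁ (L m) = 0 ∧ D₁ (I m) = I m)
    (hD₂ : ∀ m : ℤ, D₂ (L m) = ((m : ℂ) - 1) • I m ∧ D₂ (I m) = 0)
    (hD₃ : ∀ m : ℤ, D₃ (L m) = (m : ℂ) • I m ∧ D₃ (I m) = 0)

include hL hI hLL hLI hII cLL' cLI' cIL' cII' brLL' brIL' eig' exists_u' hD₁ hD₂ hD₃ in
lemma classify (D : W →ₗ[ℂ] W) (hD : ∀ x y : W, D ⁅x, y⁆ = ⁅D x, y⁆ + ⁅x, D y⁆) :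
    ∃ (u : W) (r₁ r₂ r₃ : ℂ), b.repr u (Sum.inr 0) = 0 ∧
      ∀ v, D v = ⁅u, v⁆ + r₁ • D₁ v + r₂ • D₂ v + r₃ • D₃ v := by
  classical
  have hIL' : ∀ m n : ℤ, ⁅I m, L n⁆ = (m:ℂ) • I (m + n) := by
    intro m n
    rw [← lie_skew, hLI n m, add_comm n m, neg_smul, neg_neg]
  obtain ⟨u₀, hu₀norm, hu₀⟩ := exists_u' (D (L 0))
  set α : ℂ := b.repr (D (L 0)) (Sum.inl 0) with hα0
  set β : ℂ := b.repr (D (L 0)) (Sum.inr 0) with hβ0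
  set E : W →ₗ[ℂ] W := D - (LieAlgebra.ad ℂ W u₀) with hEdef
  have hEapp : ∀ v, E v = D v - ⁅u₀, v⁆ := by
    intro v; simp [hEdef, LieAlgebra.ad_apply]
  have hE : ∀ x y : W, E ⁅x, y⁆ = ⁅E x, y⁆ + ⁅x, E y⁆ := by
    intro x y
    rw [hEapp, hEapp, hEapp, hD, leibniz_lie u₀ x y, sub_lie, lie_sub]
    abel
  have hEL0' : E (L 0) = α • L 0 + β • I 0 := by
    rw [hEapp, hu₀]; abel
  -- the eigen relation for L
  have hstar : ∀ n : ℤ, (-(n:ℂ)) • E (L n) = (α * (-(n:ℂ))) • L n + ⁅L 0, E (L n)⁆ := by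
    intro n
    have h := hE (L 0) (L n)
    rw [hLL 0 n, zero_add, map_smul, hEL0', add_lie, smul_lie, smul_lie, hIL' 0 n,
      hLL 0 n, zero_add, smul_smul, smul_smul] at h
    push_cast at h
    simp only [zero_sub, zero_smul, smul_zero, add_zero] at h
    simpa using h
  have halpha : α = 0 := by
    have h1 := congrArg (fun v => b.repr v (Sum.inl 1)) (hstar 1)
    simp only [map_add, map_smul, Finsupp.add_apply, Finsupp.smul_apply, smul_eq_mul,
      cLL', brLL'] at h1
    norm_num at h1
    exact h1
  have hEL0 : E (L 0) = β • I 0 := by rw [hEL0', halpha, zero_smul, zero_add]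
  have heign : ∀ n : ℤ, ⁅L 0, E (L n)⁆ = (-(n:ℂ)) • E (L n) := by
    intro n
    have h := hstar n
    rw [halpha, zero_mul, zero_smul, zero_add] at h
    exact h.symm
  have heigi : ∀ n : ℤ, ⁅L 0, E (I n)⁆ = (-(n:ℂ)) • E (I n) := by
    intro n
    have h := hE (L 0) (I n)
    rw [hLI 0 n, zero_add, map_smul, hEL0, smul_lie, hII 0 n, smul_zero, zero_add] at h
    exact h.symm
  set c : ℤ → ℂ := fun n => b.repr (E (L n)) (Sum.inl n) with hcdef
  set d : ℤ → ℂ := fun n => b.repr (E (L n)) (Sum.inr n) with hddef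
  set p : ℤ → ℂ := fun n => b.repr (E (I n)) (Sum.inl n) with hpdef
  set q : ℤ → ℂ := fun n => b.repr (E (I n)) (Sum.inr n) with hqdef
  have hLform : ∀ n : ℤ, E (L n) = c n • L n + d n • I n := fun n => eig' n _ (heign n)
  have hIform : ∀ n : ℤ, E (I n) = p n • L n + q n • I n := fun n => eig' n _ (heigi n)
  -- relation E2 (d)
  have hd2 : ∀ m n : ℤ, ((m:ℂ) - n) * d (m+n) = m * d m - n * d n := by
    intro m n
    have h := hE (L m) (L n)
    rw [hLL m n, map_smul, hLform (m+n), hLform m, hLform n, add_lie, smul_lie, smul_lie,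
      hIL' m n, hLL m n, lie_add, lie_smul, lie_smul, hLL m n, hLI m n] at h
    have h2 := congrArg (fun v => b.repr v (Sum.inr (m+n))) h
    simp only [map_add, map_smul, Finsupp.add_apply, Finsupp.smul_apply, smul_eq_mul,
      smul_smul, cLL', cLI', cIL', cII', if_pos rfl, mul_ite, mul_one, mul_zero, if_true] at h2
    linear_combination h2
  -- relations from [L m, I n]
  have hrelLI : ∀ m n : ℤ, (-(n:ℂ)) • E (I (m+n)) =
      (c m * (-(n:ℂ))) • I (m+n) + (p n * ((m:ℂ)-n)) • L (m+n) + (q n * (-(n:ℂ))) • I (m+n) := by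
    intro m n
    have h := hE (L m) (I n)
    rw [hLI m n, map_smul, hLform m, hIform n, add_lie, smul_lie, smul_lie,
      hLI m n, hII m n, smul_zero, add_zero, lie_add, lie_smul, lie_smul, hLL m n,
      hLI m n, smul_smul, smul_smul, smul_smul] at h
    rw [h]; abel
  have hp3 : ∀ m n : ℤ, (-(n:ℂ)) * p (m+n) = p n * ((m:ℂ) - n) := by
    intro m n
    have h2 := congrArg (fun v => b.repr v (Sum.inl (m+n))) (hrelLI m n)
    simp only [map_add, map_smul, Finsupp.add_apply, Finsupp.smul_apply, smul_eq_mul,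
      cLL', cLI', cIL', cII', if_pos rfl, mul_ite, mul_one, mul_zero, if_true] at h2
    rw [hIform (m+n)] at h2
    simp only [map_add, map_smul, Finsupp.add_apply, Finsupp.smul_apply, smul_eq_mul,
      cLL', cLI', cIL', cII', if_pos rfl, mul_ite, mul_one, mul_zero, if_true] at h2
    linear_combination h2
  have hq4 : ∀ m n : ℤ, n ≠ 0 → q (m+n) = c m + q n := by
    intro m n hn
    have h2 := congrArg (fun v => b.repr v (Sum.inr (m+n))) (hrelLI m n)
    rw [hIform (m+n)] at h2
    simp only [map_add, map_smul, Finsupp.add_apply, Finsupp.smul_apply, smul_eq_mul,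
      cLL', cLI', cIL', cII', if_pos rfl, mul_ite, mul_one, mul_zero, if_true] at h2
    have hnc : (n:ℂ) ≠ 0 := Int.cast_ne_zero.mpr hn
    have h3 : (-(n:ℂ)) * q (m+n) = (-(n:ℂ)) * (c m + q n) := by linear_combination h2
    exact mul_left_cancel₀ (neg_ne_zero.mpr hnc) h3
  -- p vanishes
  have hp2 : p 2 = 0 := by
    have h := hp3 1 1
    norm_num at h
    exact h
  have hhalf : ∀ n : ℤ, n ≠ 0 → 2 * p n = p 0 := by
    intro n hn
    have h := hp3 (-n) n
    rw [show -n + n = 0 by ring] at h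
    push_cast at h
    have hnc : (n:ℂ) ≠ 0 := Int.cast_ne_zero.mpr hn
    have h3 : (-(n:ℂ)) * p 0 = (-(n:ℂ)) * (2 * p n) := by linear_combination h
    have h4 := mul_left_cancel₀ (neg_ne_zero.mpr hnc) h3
    linear_combination -h4
  have hp0 : p 0 = 0 := by
    have h := hhalf 2 (by norm_num)
    rw [hp2] at h
    linear_combination -h
  have hp : ∀ n : ℤ, p n = 0 := by
    intro n
    rcases eq_or_ne n 0 with rfl | hn
    · exact hp0
    · have h := hhalf n hn
      rw [hp0] at h
      linear_combination h / 2
  -- c is linear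
  have hc0 : c 0 = 0 := by
    have h := hq4 0 1 one_ne_zero
    rw [zero_add] at h
    linear_combination -h
  have hcrec : ∀ m : ℤ, c m = c (m-1) + c 1 := by
    intro m
    have h1 := hq4 m 1 one_ne_zero
    have h2 := hq4 (m-1) 2 two_ne_zero
    have h3 := hq4 1 1 one_ne_zero
    rw [show m - 1 + 2 = m + 1 by ring] at h2
    norm_num at h3
    linear_combination h2 + h3 - h1
  have hc : ∀ n : ℤ, c n = (n:ℂ) * c 1 := by
    intro n
    induction n using Int.induction_on with
    | zero => simpa using hc0
    | succ i ih =>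
        have h := hcrec ((i:ℤ)+1)
        rw [show (i:ℤ)+1-1 = (i:ℤ) by ring, ih] at h
        rw [h]; push_cast; ring
    | pred i ih =>
        have h := hcrec (-(i:ℤ))
        rw [ih] at h
        push_cast at h ⊢
        linear_combination -h
  have hq1 : ∀ n : ℤ, q n = ((n:ℂ) - 1) * c 1 + q 1 := by
    intro n
    have h := hq4 (n-1) 1 one_ne_zero
    rw [show n - 1 + 1 = n by ring, hc (n-1)] at h
    rw [h]; push_cast; ring
  -- d is affine
  have hrefl : ∀ m : ℤ, m ≠ 0 → d (-m) = 2 * d 0 - d m := by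
    intro m hm
    have h := hd2 m (-m)
    rw [show m + -m = 0 by ring] at h
    push_cast at h
    have hmc : (m:ℂ) ≠ 0 := Int.cast_ne_zero.mpr hm
    have h3 : (m:ℂ) * d (-m) = (m:ℂ) * (2 * d 0 - d m) := by linear_combination -h
    exact mul_left_cancel₀ hmc h3
  have hdval2 : d 2 = 2 * d 1 - d 0 := by
    have hA := hd2 2 1
    have hB := hd2 (-1) 3
    have hC := hrefl 1 one_ne_zero
    norm_num at hA hB
    linear_combination (-3/2) * hA + (1/2) * hB - (1/2) * hC
  set δ : ℂ := d 1 - d 0 with hδ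
  have hdnat : ∀ k : ℕ, d k = d 0 + k * δ ∧ d ((k:ℤ)+1) = d 0 + ((k:ℂ)+1) * δ := by
    intro k
    induction k with
    | zero =>
        constructor
        · norm_num
        · simp only [Nat.cast_zero, zero_add]
          rw [hδ]; ring
    | succ n ih =>
        constructor
        · have := ih.2
          push_cast
          convert this using 2 <;> push_cast <;> ring
        · rcases Nat.eq_zero_or_pos n with rfl | hn
          · norm_num [hdval2, hδ]
            ring
          · have h := hd2 ((n:ℤ)+1) 1
            rw [show (n:ℤ)+1+1 = (n:ℤ)+2 by ring] at h
            have hnc : (n:ℂ) ≠ 0 := Nat.cast_ne_zero.mpr hn.ne'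
            have h2 := ih.2
            have h3 : (n:ℂ) * d ((n:ℤ)+2) = (n:ℂ) * (d 0 + ((n:ℂ)+2) * δ) := by
              push_cast at h ⊢
              linear_combination h + ((n:ℂ)+1) * h2 + hδ
            have h4 := mul_left_cancel₀ hnc h3
            push_cast
            convert h4 using 2 <;> push_cast <;> ring
  have hd : ∀ m : ℤ, d m = d 0 + (m:ℂ) * δ := by
    intro m
    rcases le_or_gt 0 m with hm | hm
    · obtain ⟨k, rfl⟩ := Int.eq_ofNat_of_zero_le hm
      exact_mod_cast (hdnat k).1
    · have h1 := hrefl (-m) (by omega)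
      rw [neg_neg] at h1
      obtain ⟨k, hk⟩ := Int.eq_ofNat_of_zero_le (by omega : (0:ℤ) ≤ -m)
      have h2 : d (-m) = d 0 + ((-m : ℤ):ℂ) * δ := by
        rw [hk]; exact_mod_cast (hdnat k).1
      rw [h2] at h1
      rw [h1]; push_cast; ring
  -- final assembly
  refine ⟨u₀ - c 1 • L 0, q 1 - c 1, -(d 0), d 1, ?_, ?_⟩
  · rw [map_sub, map_smul, Finsupp.sub_apply, Finsupp.smul_apply, hu₀norm, cIL',
      smul_eq_mul, mul_zero, sub_zero]
  · have key : D = ((LieAlgebra.ad ℂ W (u₀ - c 1 • L 0)) : W →ₗ[ℂ] W)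
        + (q 1 - c 1) • D₁ + (-(d 0)) • D₂ + d 1 • D₃ := by
      apply b.ext
      rintro (n | n)
      · rw [← hL n]
        have hDn : D (L n) = E (L n) + ⁅u₀, L n⁆ := by rw [hEapp]; abel
        rw [hDn, hLform n, hc n, hd n]
        simp only [LinearMap.add_apply, LinearMap.smul_apply, LieAlgebra.ad_apply,
          sub_lie, smul_lie, (hD₁ n).1, (hD₂ n).1, (hD₃ n).1, hLL 0 n, zero_add,
          smul_zero, hδ]
        push_cast
        module
      · rw [← hI n]
        have hDn : D (I n) = E (I n) + ⁅u₀, I n⁆ := by rw [hEapp]; abel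
        rw [hDn, hIform n, hp n, hq1 n]
        simp only [LinearMap.add_apply, LinearMap.smul_apply, LieAlgebra.ad_apply,
          sub_lie, smul_lie, (hD₁ n).2, (hD₂ n).2, (hD₃ n).2, hLI 0 n, zero_add,
          smul_zero]
        push_cast
        module
    intro v
    have := LinearMap.congr_fun key v
    simp only [LinearMap.add_apply, LinearMap.smul_apply, LieAlgebra.ad_apply] at this
    exact this
end aux3

section aux4
variable {W : Type*} [LieRing W] [LieAlgebra ℂ W]
    (b : Module.Basis (ℤ ⊕ ℤ) ℂ W) (L I : ℤ → W)
    (cLL' : ∀ m n : ℤ, b.repr (L n) (Sum.inl m) = if n = m then 1 else 0)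
    (cLI' : ∀ m n : ℤ, b.repr (I n) (Sum.inl m) = 0)
    (cIL' : ∀ m n : ℤ, b.repr (L n) (Sum.inr m) = 0)
    (cII' : ∀ m n : ℤ, b.repr (I n) (Sum.inr m) = if n = m then 1 else 0)
    (brLL' : ∀ (k m : ℤ) (x : W),
      b.repr ⁅L k, x⁆ (Sum.inl m) = (2*(k:ℂ) - m) * b.repr x (Sum.inl (m - k)))
    (brIL' : ∀ (k m : ℤ) (x : W),
      b.repr ⁅L k, x⁆ (Sum.inr m) = ((k:ℂ) - m) * b.repr x (Sum.inr (m - k)))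
    (brIIr' : ∀ (k m : ℤ) (x : W),
      b.repr ⁅x, I k⁆ (Sum.inr m) = -(k:ℂ) * b.repr x (Sum.inl (m - k)))
    (D₁ D₂ D₃ : W →ₗ[ℂ] W)
    (hD₁ : ∀ m : ℤ, D₁ (L m) = 0 ∧ D₁ (I m) = I m)
    (hD₂ : ∀ m : ℤ, D₂ (L m) = ((m : ℂ) - 1) • I m ∧ D₂ (I m) = 0)
    (hD₃ : ∀ m : ℤ, D₃ (L m) = (m : ℂ) • I m ∧ D₃ (I m) = 0)

include cLL' cLI' cIL' cII' brLL' brIL' brIIr' hD₁ hD₂ hD₃ in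
lemma uniq (u : W) (r₁ r₂ r₃ : ℂ) (hnorm : b.repr u (Sum.inr 0) = 0)
    (h : ∀ v, ⁅u, v⁆ + r₁ • D₁ v + r₂ • D₂ v + r₃ • D₃ v = 0) :
    u = 0 ∧ r₁ = 0 ∧ r₂ = 0 ∧ r₃ = 0 := by
  classical
  -- from v = I k
  have hIk : ∀ j : ℤ, -(1:ℂ) * b.repr u (Sum.inl j) + r₁ * (if (1:ℤ) = j + 1 then 1 else 0) = 0 := by
    intro j
    have h0 := h (I 1)
    rw [(hD₁ 1).2, (hD₂ 1).2, (hD₃ 1).2, smul_zero, smul_zero, add_zero, add_zero] at h0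
    have h2 := congrArg (fun v => b.repr v (Sum.inr (j+1))) h0
    simp only [map_add, map_smul, Finsupp.add_apply, Finsupp.smul_apply, smul_eq_mul,
      brIIr', cII', Finsupp.zero_apply, map_zero] at h2
    rw [show j + 1 - 1 = j by ring] at h2
    push_cast at h2
    convert h2 using 2
  have hul : ∀ j : ℤ, j ≠ 0 → b.repr u (Sum.inl j) = 0 := by
    intro j hj
    have h2 := hIk j
    rw [if_neg (by omega)] at h2
    linear_combination -h2
  have hul0 : b.repr u (Sum.inl 0) = r₁ := by
    have h2 := hIk 0
    rw [if_pos (by norm_num)] at h2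
    linear_combination -h2
  -- from v = L m, inl coordinate
  have hLm : ∀ m : ℤ, ⁅u, L m⁆ + (r₂ * ((m:ℂ)-1) + r₃ * m) • I m = 0 := by
    intro m
    have h0 := h (L m)
    rw [(hD₁ m).1, (hD₂ m).1, (hD₃ m).1, smul_zero, add_zero, smul_smul, smul_smul,
      add_assoc, ← add_smul] at h0
    exact h0
  have hr₁ : r₁ = 0 := by
    have h2 := congrArg (fun v => b.repr v (Sum.inl 1)) (hLm 1)
    have hsk : ⁅u, L 1⁆ = -⁅L 1, u⁆ := (lie_skew _ _).symm
    rw [hsk] at h2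
    simp only [map_add, map_neg, map_smul, Finsupp.add_apply, Finsupp.neg_apply,
      Finsupp.smul_apply, smul_eq_mul, brLL', cLI', map_zero, Finsupp.zero_apply] at h2
    rw [show (1:ℤ) - 1 = 0 by ring] at h2
    rw [hul0] at h2
    push_cast at h2
    linear_combination -h2
  have hulall : ∀ j : ℤ, b.repr u (Sum.inl j) = 0 := by
    intro j
    rcases eq_or_ne j 0 with rfl | hj
    · rw [hul0, hr₁]
    · exact hul j hj
  -- inr coordinates from v = L m
  have hinr : ∀ m j : ℤ, -(((m:ℂ) - j) * b.repr u (Sum.inr (j - m)))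
      + (r₂ * ((m:ℂ)-1) + r₃ * m) * (if m = j then 1 else 0) = 0 := by
    intro m j
    have h2 := congrArg (fun v => b.repr v (Sum.inr j)) (hLm m)
    have hsk : ⁅u, L m⁆ = -⁅L m, u⁆ := (lie_skew _ _).symm
    rw [hsk] at h2
    simp only [map_add, map_neg, map_smul, Finsupp.add_apply, Finsupp.neg_apply,
      Finsupp.smul_apply, smul_eq_mul, brIL', cII', map_zero, Finsupp.zero_apply] at h2
    exact h2
  have hur : ∀ t : ℤ, t ≠ 0 → b.repr u (Sum.inr t) = 0 := by
    intro t ht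
    have h2 := hinr 0 t
    rw [if_neg (by omega)] at h2
    rw [show t - 0 = t by ring] at h2
    push_cast at h2
    have htc : (t:ℂ) ≠ 0 := Int.cast_ne_zero.mpr ht
    have h3 : (t:ℂ) * b.repr u (Sum.inr t) = (t:ℂ) * 0 := by linear_combination h2
    exact mul_left_cancel₀ htc h3
  have hr₂ : r₂ = 0 := by
    have h2 := hinr 0 0
    rw [if_pos rfl, show (0:ℤ) - 0 = 0 by ring, hnorm] at h2
    push_cast at h2
    linear_combination -h2
  have hr₃ : r₃ = 0 := by
    have h2 := hinr 1 1
    rw [if_pos rfl, show (1:ℤ) - 1 = 0 by ring, hnorm] at h2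
    rw [hr₂] at h2
    push_cast at h2
    linear_combination h2
  refine ⟨?_, hr₁, hr₂, hr₃⟩
  apply b.repr.injective
  ext j
  rcases j with t | t
  · simp [hulall t]
  · rcases eq_or_ne t 0 with rfl | ht
    · simpa using hnorm
    · simp [hur t ht]
end aux4

section aux5
variable {W : Type*} [LieRing W] [LieAlgebra ℂ W]
    (b : Module.Basis (ℤ ⊕ ℤ) ℂ W)
    (D₁ D₂ D₃ : W →ₗ[ℂ] W)

theorem stmt6' (f : W →ₗ[ℂ] W →ₗ[ℂ] W)
    (hf1 : ∀ x y z : W, f ⁅x, y⁆ z = ⁅x, f y z⁆ + ⁅f x z, y⁆)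
    (hf2 : ∀ x y z : W, f x ⁅y, z⁆ = ⁅f x y, z⁆ + ⁅y, f x z⁆)
    (classify' : ∀ (D : W →ₗ[ℂ] W), (∀ x y : W, D ⁅x, y⁆ = ⁅D x, y⁆ + ⁅x, D y⁆) →
      ∃ (u : W) (r₁ r₂ r₃ : ℂ), b.repr u (Sum.inr 0) = 0 ∧
        ∀ v, D v = ⁅u, v⁆ + r₁ • D₁ v + r₂ • D₂ v + r₃ • D₃ v)
    (uniq' : ∀ (u : W) (r₁ r₂ r₃ : ℂ), b.repr u (Sum.inr 0) = 0 →
      (∀ v, ⁅u, v⁆ + r₁ • D₁ v + r₂ • D₂ v + r₃ • D₃ v = 0) →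
      u = 0 ∧ r₁ = 0 ∧ r₂ = 0 ∧ r₃ = 0) :
    ∃ (φ ψ : W →ₗ[ℂ] W) (ρ₁ ρ₂ ρ₃ θ₁ θ₂ θ₃ : W →ₗ[ℂ] ℂ), ∀ x y : W,
      f x y = ρ₁ x • D₁ y + ρ₂ x • D₂ y + ρ₃ x • D₃ y + ⁅φ x, y⁆ ∧
      f x y = θ₁ y • D₁ x + θ₂ y • D₂ x + θ₃ y • D₃ x + ⁅x, ψ y⁆ := by
  classical
  -- uniqueness of normalized decompositions
  have huniq2 : ∀ (D : W →ₗ[ℂ] W) (t t' : W × ℂ × ℂ × ℂ),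
      (b.repr t.1 (Sum.inr 0) = 0 ∧ ∀ v, D v = ⁅t.1, v⁆ + t.2.1 • D₁ v + t.2.2.1 • D₂ v + t.2.2.2 • D₃ v) →
      (b.repr t'.1 (Sum.inr 0) = 0 ∧ ∀ v, D v = ⁅t'.1, v⁆ + t'.2.1 • D₁ v + t'.2.2.1 • D₂ v + t'.2.2.2 • D₃ v) →
      t = t' := by
    rintro D ⟨u, r1, r2, r3⟩ ⟨u', r1', r2', r3'⟩ ⟨hn, hv⟩ ⟨hn', hv'⟩
    have h := uniq' (u - u') (r1 - r1') (r2 - r2') (r3 - r3') (by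
        rw [map_sub, Finsupp.sub_apply, hn, hn', sub_zero])
      (by
        intro v
        have hz : (⁅u, v⁆ + r1 • D₁ v + r2 • D₂ v + r3 • D₃ v)
            - (⁅u', v⁆ + r1' • D₁ v + r2' • D₂ v + r3' • D₃ v) = 0 := by
          rw [← hv v, ← hv' v, sub_self]
        rw [← hz, sub_lie, sub_smul, sub_smul, sub_smul]
        abel)
    obtain ⟨h1, h2, h3, h4⟩ := h
    have e1 : u = u' := by rwa [sub_eq_zero] at h1
    have e2 : r1 = r1' := by rwa [sub_eq_zero] at h2
    have e3 : r2 = r2' := by rwa [sub_eq_zero] at h3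
    have e4 : r3 = r3' := by rwa [sub_eq_zero] at h4
    simp [e1, e2, e3, e4]
  -- first decomposition: x ↦ f x ⬝ is a derivation
  have hex : ∀ x : W, ∃ t : W × ℂ × ℂ × ℂ, b.repr t.1 (Sum.inr 0) = 0 ∧
      ∀ v, f x v = ⁅t.1, v⁆ + t.2.1 • D₁ v + t.2.2.1 • D₂ v + t.2.2.2 • D₃ v := by
    intro x
    obtain ⟨u, r1, r2, r3, hn, hv⟩ := classify' (f x) (fun y z => hf2 x y z)
    exact ⟨(u, r1, r2, r3), hn, hv⟩
  choose g hg using hex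
  have hchar : ∀ (x : W) (t : W × ℂ × ℂ × ℂ), (b.repr t.1 (Sum.inr 0) = 0 ∧
      ∀ v, f x v = ⁅t.1, v⁆ + t.2.1 • D₁ v + t.2.2.1 • D₂ v + t.2.2.2 • D₃ v) → t = g x :=
    fun x t ht => huniq2 (f x) t (g x) ht (hg x)
  have hgadd : ∀ x y : W, g (x + y) = ((g x).1 + (g y).1, (g x).2.1 + (g y).2.1,
      (g x).2.2.1 + (g y).2.2.1, (g x).2.2.2 + (g y).2.2.2) := by
    intro x y
    refine (hchar (x+y) _ ⟨?_, ?_⟩).symm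
    · simp only [map_add, Finsupp.add_apply, (hg x).1, (hg y).1, add_zero]
    · intro v
      rw [map_add, LinearMap.add_apply, (hg x).2 v, (hg y).2 v]
      simp only [add_lie, add_smul]
      abel
  have hgsmul : ∀ (a : ℂ) (x : W), g (a • x) = (a • (g x).1, a * (g x).2.1,
      a * (g x).2.2.1, a * (g x).2.2.2) := by
    intro a x
    refine (hchar (a • x) _ ⟨?_, ?_⟩).symm
    · simp only [map_smul, Finsupp.smul_apply, (hg x).1, smul_zero]
    · intro v
      rw [map_smul, LinearMap.smul_apply, (hg x).2 v]
      simp only [smul_add, smul_lie, mul_smul]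
  -- second decomposition: y ↦ f ⬝ y is a derivation
  have hex' : ∀ y : W, ∃ t : W × ℂ × ℂ × ℂ, b.repr t.1 (Sum.inr 0) = 0 ∧
      ∀ v, f v y = ⁅t.1, v⁆ + t.2.1 • D₁ v + t.2.2.1 • D₂ v + t.2.2.2 • D₃ v := by
    intro y
    obtain ⟨u, r1, r2, r3, hn, hv⟩ := classify' (f.flip y) (by
      intro x z
      simp only [LinearMap.flip_apply]
      rw [hf1 x z y]
      abel)
    exact ⟨(u, r1, r2, r3), hn, fun v => by simpa using hv v⟩
  choose g' hg' using hex'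
  have hchar' : ∀ (y : W) (t : W × ℂ × ℂ × ℂ), (b.repr t.1 (Sum.inr 0) = 0 ∧
      ∀ v, f v y = ⁅t.1, v⁆ + t.2.1 • D₁ v + t.2.2.1 • D₂ v + t.2.2.2 • D₃ v) → t = g' y := by
    intro y t ht
    refine huniq2 (f.flip y) t (g' y) ?_ ?_
    · exact ⟨ht.1, fun v => by simpa using ht.2 v⟩
    · exact ⟨(hg' y).1, fun v => by simpa using (hg' y).2 v⟩
  have hgadd' : ∀ x y : W, g' (x + y) = ((g' x).1 + (g' y).1, (g' x).2.1 + (g' y).2.1,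
      (g' x).2.2.1 + (g' y).2.2.1, (g' x).2.2.2 + (g' y).2.2.2) := by
    intro x y
    refine (hchar' (x+y) _ ⟨?_, ?_⟩).symm
    · simp only [map_add, Finsupp.add_apply, (hg' x).1, (hg' y).1, add_zero]
    · intro v
      rw [map_add, (hg' x).2 v, (hg' y).2 v]
      simp only [add_lie, add_smul]
      abel
  have hgsmul' : ∀ (a : ℂ) (x : W), g' (a • x) = (a • (g' x).1, a * (g' x).2.1,
      a * (g' x).2.2.1, a * (g' x).2.2.2) := by
    intro a x
    refine (hchar' (a • x) _ ⟨?_, ?_⟩).symm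
    · simp only [map_smul, Finsupp.smul_apply, (hg' x).1, smul_zero]
    · intro v
      rw [map_smul, (hg' x).2 v]
      simp only [smul_add, smul_lie, mul_smul]
  -- build the linear maps
  refine ⟨{ toFun := fun x => (g x).1,
            map_add' := fun x y => show (g (x+y)).1 = (g x).1 + (g y).1 by rw [hgadd],
            map_smul' := fun a x => show (g (a • x)).1 = a • (g x).1 by rw [hgsmul] },
          { toFun := fun y => -(g' y).1,
            map_add' := fun x y => show -(g' (x+y)).1 = -(g' x).1 + -(g' y).1 by
              rw [hgadd']; exact neg_add _ _,
            map_smul' := fun a x => show -(g' (a • x)).1 = a • -(g' x).1 by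
              rw [hgsmul']; simp },
          { toFun := fun x => (g x).2.1,
            map_add' := fun x y => show (g (x+y)).2.1 = (g x).2.1 + (g y).2.1 by rw [hgadd],
            map_smul' := fun a x => show (g (a • x)).2.1 = a • (g x).2.1 by
              rw [hgsmul]; rfl },
          { toFun := fun x => (g x).2.2.1,
            map_add' := fun x y => show (g (x+y)).2.2.1 = (g x).2.2.1 + (g y).2.2.1 by rw [hgadd],
            map_smul' := fun a x => show (g (a • x)).2.2.1 = a • (g x).2.2.1 by
              rw [hgsmul]; rfl },
          { toFun := fun x => (g x).2.2.2,
            map_add' := fun x y => show (g (x+y)).2.2.2 = (g x).2.2.2 + (g y).2.2.2 by rw [hgadd],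
            map_smul' := fun a x => show (g (a • x)).2.2.2 = a • (g x).2.2.2 by
              rw [hgsmul]; rfl },
          { toFun := fun y => (g' y).2.1,
            map_add' := fun x y => show (g' (x+y)).2.1 = (g' x).2.1 + (g' y).2.1 by rw [hgadd'],
            map_smul' := fun a x => show (g' (a • x)).2.1 = a • (g' x).2.1 by
              rw [hgsmul']; rfl },
          { toFun := fun y => (g' y).2.2.1,
            map_add' := fun x y => show (g' (x+y)).2.2.1 = (g' x).2.2.1 + (g' y).2.2.1 by rw [hgadd'],
            map_smul' := fun a x => show (g' (a • x)).2.2.1 = a • (g' x).2.2.1 by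
              rw [hgsmul']; rfl },
          { toFun := fun y => (g' y).2.2.2,
            map_add' := fun x y => show (g' (x+y)).2.2.2 = (g' x).2.2.2 + (g' y).2.2.2 by rw [hgadd'],
            map_smul' := fun a x => show (g' (a • x)).2.2.2 = a • (g' x).2.2.2 by
              rw [hgsmul']; rfl },
          ?_⟩
  intro x y
  constructor
  · simp only [LinearMap.coe_mk, AddHom.coe_mk]
    rw [(hg x).2 y]
    abel
  · simp only [LinearMap.coe_mk, AddHom.coe_mk]
    rw [(hg' y).2 x]
    rw [lie_neg, ← lie_skew]
    abel
end aux5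

/-- Lemma 3.4: every biderivation `f` of `W(0,0)` may be written in the two forms
`f(x,y) = ρ₁(x)D₁(y) + ρ₂(x)D₂(y) + ρ₃(x)D₃(y) + [φ(x), y]`
and `f(x,y) = θ₁(y)D₁(x) + θ₂(y)D₂(x) + θ₃(y)D₃(x) + [x, ψ(y)]`. -/
theorem stmt6 {W : Type*} [LieRing W] [LieAlgebra ℂ W]
    (b : Module.Basis (ℤ ⊕ ℤ) ℂ W) (L I : ℤ → W)
    (hL : ∀ n : ℤ, L n = b (Sum.inl n))
    (hI : ∀ n : ℤ, I n = b (Sum.inr n))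
    (hLL : ∀ m n : ℤ, ⁅L m, L n⁆ = ((m : ℂ) - (n : ℂ)) • L (m + n))
    (hLI : ∀ m n : ℤ, ⁅L m, I n⁆ = (-(n : ℂ)) • I (m + n))
    (hII : ∀ m n : ℤ, ⁅I m, I n⁆ = 0)
    (D₁ D₂ D₃ : W →ₗ[ℂ] W)
    (hD₁ : ∀ m : ℤ, D₁ (L m) = 0 ∧ D₁ (I m) = I m)
    (hD₂ : ∀ m : ℤ, D₂ (L m) = ((m : ℂ) - 1) • I m ∧ D₂ (I m) = 0)
    (hD₃ : ∀ m : ℤ, D₃ (L m) = (m : ℂ) • I m ∧ D₃ (I m) = 0)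
    (f : W →ₗ[ℂ] W →ₗ[ℂ] W)
    (hf1 : ∀ x y z : W, f ⁅x, y⁆ z = ⁅x, f y z⁆ + ⁅f x z, y⁆)
    (hf2 : ∀ x y z : W, f x ⁅y, z⁆ = ⁅f x y, z⁆ + ⁅y, f x z⁆) :
    ∃ (φ ψ : W →ₗ[ℂ] W) (ρ₁ ρ₂ ρ₃ θ₁ θ₂ θ₃ : W →ₗ[ℂ] ℂ), ∀ x y : W,
      f x y = ρ₁ x • D₁ y + ρ₂ x • D₂ y + ρ₃ x • D₃ y + ⁅φ x, y⁆ ∧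
      f x y = θ₁ y • D₁ x + θ₂ y • D₂ x + θ₃ y • D₃ x + ⁅x, ψ y⁆ := by
  refine stmt6' b D₁ D₂ D₃ f hf1 hf2 ?_ ?_
  · intro D hD
    exact classify b L I hL hI hLL hLI hII
      (cLL b L hL) (cLI b I hI) (cIL b L hL) (cII b I hI)
      (brLL b L I hL hI hLL hLI) (brIL b L I hL hI hLL hLI)
      (eig b L I hL hI (brLL b L I hL hI hLL hLI) (brIL b L I hL hI hLL hLI))
      (exists_u b L I hL hI (brLL b L I hL hI hLL hLI) (brIL b L I hL hI hLL hLI))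
      D₁ D₂ D₃ hD₁ hD₂ hD₃ D hD
  · intro u r1 r2 r3 hn hv
    exact uniq b L I
      (cLL b L hL) (cLI b I hI) (cIL b L hL) (cII b I hI)
      (brLL b L I hL hI hLL hLI) (brIL b L I hL hI hLL hLI)
      (brIIr b L I hL hI hLI hII)
      D₁ D₂ D₃ hD₁ hD₂ hD₃ u r1 r2 r3 hn hv
end

section
/- Let f be a biderivation of the Lie algebra W(0,0). Then there exist λ ∈ ℂ and a finitely supported function μ : ℤ → ℂ such that for all m, n ∈ ℤ: f(L_m, L_n) = λ·(m − n)·L_{m+n} + Σ_{k∈ℤ} μ(k)·I_{m+n+k}, f(L_m, I_n) = −λ·n·I_{m+n}, f(I_n, L_m) = λ·n·I_{m+n}, and f(I_m, I_n) = 0; that is, f(x, y) = λ·[x, y] + r_μ(x, y) for all x, y ∈ W(0,0), where r_μ is the bilinear map with r_μ(L_m, L_n) = Σ_{k∈ℤ} μ(k)·I_{m+n+k} and r_μ(x, y) = 0 whenever x or y lies in the span of {I_n : n ∈ ℤ}. -/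
set_option maxHeartbeats 1000000 in
/-- Lemma 3.8: every biderivation of `W(0,0)` has the form
`f(x,y) = λ·[x,y] + r_μ(x,y)` for some `λ ∈ ℂ` and some finitely supported `μ : ℤ → ℂ`,
where `r_μ(L_m, L_n) = Σ_k μ(k)·I_{m+n+k}` and `r_μ` vanishes whenever one of its arguments
lies in the span of the `I_n` (so that `f(x,y) = λ·[x,y]` there). -/
theorem stmt7 {W : Type*} [LieRing W] [LieAlgebra ℂ W]
    (b : Module.Basis (ℤ ⊕ ℤ) ℂ W) (L I : ℤ → W)
    (hL : ∀ n : ℤ, L n = b (Sum.inl n))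
    (hI : ∀ n : ℤ, I n = b (Sum.inr n))
    (hLL : ∀ m n : ℤ, ⁅L m, L n⁆ = ((m : ℂ) - (n : ℂ)) • L (m + n))
    (hLI : ∀ m n : ℤ, ⁅L m, I n⁆ = (-(n : ℂ)) • I (m + n))
    (hII : ∀ m n : ℤ, ⁅I m, I n⁆ = 0)
    (f : W →ₗ[ℂ] W →ₗ[ℂ] W)
    (hf1 : ∀ x y z : W, f ⁅x, y⁆ z = ⁅x, f y z⁆ + ⁅f x z, y⁆)
    (hf2 : ∀ x y z : W, f x ⁅y, z⁆ = ⁅f x y, z⁆ + ⁅y, f x z⁆) :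
    ∃ (lam : ℂ) (μ : ℤ →₀ ℂ),
      (∀ m n : ℤ,
        f (L m) (L n) = (lam * ((m : ℂ) - (n : ℂ))) • L (m + n)
            + μ.sum (fun k c => c • I (m + n + k)) ∧
        f (L m) (I n) = (-(lam * (n : ℂ))) • I (m + n) ∧
        f (I n) (L m) = (lam * (n : ℂ)) • I (m + n) ∧
        f (I m) (I n) = 0) ∧
      (∀ x y : W,
        x ∈ Submodule.span ℂ (Set.range I) ∨ y ∈ Submodule.span ℂ (Set.range I) →
          f x y = lam • ⁅x, y⁆) := by
  classical
  set cl : ℤ → W →ₗ[ℂ] ℂ := fun j => b.coord (Sum.inl j) with hcldef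
  set ci : ℤ → W →ₗ[ℂ] ℂ := fun j => b.coord (Sum.inr j) with hcidef
  have hclL0 : ∀ n j : ℤ, cl j (L n) = if n = j then 1 else 0 := by
    intro n j
    simp [hcldef, hL, Module.Basis.coord_apply, Module.Basis.repr_self, Finsupp.single_apply]
  have hciL0 : ∀ n j : ℤ, ci j (L n) = 0 := by
    intro n j
    simp [hcidef, hL, Module.Basis.coord_apply, Module.Basis.repr_self, Finsupp.single_apply]
  have hclI0 : ∀ n j : ℤ, cl j (I n) = 0 := by
    intro n j
    simp [hcldef, hI, Module.Basis.coord_apply, Module.Basis.repr_self, Finsupp.single_apply]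
  have hciI0 : ∀ n j : ℤ, ci j (I n) = if n = j then 1 else 0 := by
    intro n j
    simp [hcidef, hI, Module.Basis.coord_apply, Module.Basis.repr_self, Finsupp.single_apply]
  have hext : ∀ v u : W, (∀ j, cl j v = cl j u) → (∀ j, ci j v = ci j u) → v = u := by
    intro v u h1 h2
    apply b.repr.injective
    ext i
    rcases i with j | j
    · exact h1 j
    · exact h2 j
  -- bracket coefficient lemmas
  have hLcl : ∀ (m j : ℤ) (v : W),
      cl j ⁅L m, v⁆ = (2*(m:ℂ) - (j:ℂ)) * cl (j-m) v := by
    intro m j v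
    have h : (cl j).comp ((LieAlgebra.ad ℂ W) (L m)) = (2*(m:ℂ) - (j:ℂ)) • cl (j-m) := by
      apply b.ext
      rintro (n | n) <;>
        rw [LinearMap.comp_apply, LieAlgebra.ad_apply, LinearMap.smul_apply]
      · rw [← hL n, hLL m n, map_smul]
        simp only [hclL0, smul_eq_mul]
        split_ifs with h1 h2 h2
        · have : n = j - m := h2
          subst this
          push_cast
          ring
        · omega
        · omega
        · ring
      · rw [← hI n, hLI m n, map_smul]
        simp only [hclI0, smul_eq_mul, smul_zero, mul_zero]
    have := LinearMap.congr_fun h v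
    simpa [LieAlgebra.ad_apply, smul_eq_mul] using this
  have hLci : ∀ (m j : ℤ) (v : W),
      ci j ⁅L m, v⁆ = ((m:ℂ) - (j:ℂ)) * ci (j-m) v := by
    intro m j v
    have h : (ci j).comp ((LieAlgebra.ad ℂ W) (L m)) = ((m:ℂ) - (j:ℂ)) • ci (j-m) := by
      apply b.ext
      rintro (n | n) <;>
        rw [LinearMap.comp_apply, LieAlgebra.ad_apply, LinearMap.smul_apply]
      · rw [← hL n, hLL m n, map_smul]
        simp only [hciL0, smul_eq_mul, smul_zero, mul_zero]
      · rw [← hI n, hLI m n, map_smul]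
        simp only [hciI0, smul_eq_mul]
        split_ifs with h1 h2 h2
        · have : n = j - m := h2
          subst this
          push_cast
          ring
        · omega
        · omega
        · ring
    have := LinearMap.congr_fun h v
    simpa [LieAlgebra.ad_apply, smul_eq_mul] using this
  have hIcl : ∀ (m j : ℤ) (v : W), cl j ⁅I m, v⁆ = 0 := by
    intro m j v
    have h : (cl j).comp ((LieAlgebra.ad ℂ W) (I m)) = 0 := by
      apply b.ext
      rintro (n | n) <;>
        rw [LinearMap.comp_apply, LieAlgebra.ad_apply, LinearMap.zero_apply]
      · rw [← hL n, ← lie_skew, hLI n m, map_neg, map_smul]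
        simp only [hclI0, smul_zero, neg_zero]
      · rw [← hI n, hII m n, map_zero]
    have := LinearMap.congr_fun h v
    simpa [LieAlgebra.ad_apply] using this
  have hIci : ∀ (m j : ℤ) (v : W),
      ci j ⁅I m, v⁆ = (m:ℂ) * cl (j-m) v := by
    intro m j v
    have h : (ci j).comp ((LieAlgebra.ad ℂ W) (I m)) = (m:ℂ) • cl (j-m) := by
      apply b.ext
      rintro (n | n) <;>
        rw [LinearMap.comp_apply, LieAlgebra.ad_apply, LinearMap.smul_apply]
      · rw [← hL n, ← lie_skew, hLI n m, map_neg, map_smul]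
        simp only [hciI0, smul_eq_mul, hclL0]
        split_ifs with h1 h2 h2
        · ring
        · omega
        · omega
        · ring
      · rw [← hI n, hII m n, map_zero]
        simp only [hclI0, smul_eq_mul, mul_zero]
    have := LinearMap.congr_fun h v
    simpa [LieAlgebra.ad_apply, smul_eq_mul] using this
  -- right bracket versions
  have hRcl : ∀ (m j : ℤ) (v : W), cl j ⁅v, L m⁆ = -((2*(m:ℂ) - (j:ℂ)) * cl (j-m) v) := by
    intro m j v
    rw [← lie_skew, map_neg, hLcl]
  have hRci : ∀ (m j : ℤ) (v : W), ci j ⁅v, L m⁆ = -(((m:ℂ) - (j:ℂ)) * ci (j-m) v) := by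
    intro m j v
    rw [← lie_skew, map_neg, hLci]
  have hRIcl : ∀ (m j : ℤ) (v : W), cl j ⁅v, I m⁆ = 0 := by
    intro m j v
    rw [← lie_skew, map_neg, hIcl, neg_zero]
  have hRIci : ∀ (m j : ℤ) (v : W), ci j ⁅v, I m⁆ = -((m:ℂ) * cl (j-m) v) := by
    intro m j v
    rw [← lie_skew, map_neg, hIci]
  -- coefficient functions
  set A : ℤ → ℤ → ℤ → ℂ := fun m n j => cl j (f (L m) (L n)) with hAdef
  set B : ℤ → ℤ → ℤ → ℂ := fun m n j => ci j (f (L m) (L n)) with hBdef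
  set C : ℤ → ℤ → ℤ → ℂ := fun m n j => cl j (f (L m) (I n)) with hCdef
  set D : ℤ → ℤ → ℤ → ℂ := fun m n j => ci j (f (L m) (I n)) with hDdef
  set E : ℤ → ℤ → ℤ → ℂ := fun m n j => cl j (f (I m) (L n)) with hEdef
  set F : ℤ → ℤ → ℤ → ℂ := fun m n j => ci j (f (I m) (L n)) with hFdef
  set G : ℤ → ℤ → ℤ → ℂ := fun m n j => cl j (f (I m) (I n)) with hGdef
  set H : ℤ → ℤ → ℤ → ℂ := fun m n j => ci j (f (I m) (I n)) with hHdef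
  -- ================== the 13 scalar equation families ==================
  have E1a : ∀ p q r j : ℤ,
      ((p:ℂ) - q) * A (p+q) r j =
        (2*(p:ℂ) - j) * A q r (j-p) - (2*(q:ℂ) - j) * A p r (j-q) := by
    intro p q r j
    have h := congrArg (cl j) (hf1 (L p) (L q) (L r))
    rw [hLL p q, map_smul, LinearMap.smul_apply, map_smul, map_add, hLcl, hRcl,
      smul_eq_mul] at h
    simp only [hAdef]
    linear_combination h
  have E1b : ∀ p q r j : ℤ,
      ((p:ℂ) - q) * B (p+q) r j =
        ((p:ℂ) - j) * B q r (j-p) - ((q:ℂ) - j) * B p r (j-q) := by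
    intro p q r j
    have h := congrArg (ci j) (hf1 (L p) (L q) (L r))
    rw [hLL p q, map_smul, LinearMap.smul_apply, map_smul, map_add, hLci, hRci,
      smul_eq_mul] at h
    simp only [hBdef]
    linear_combination h
  have E1D : ∀ p q r j : ℤ,
      ((p:ℂ) - q) * D (p+q) r j =
        ((p:ℂ) - j) * D q r (j-p) - ((q:ℂ) - j) * D p r (j-q) := by
    intro p q r j
    have h := congrArg (ci j) (hf1 (L p) (L q) (I r))
    rw [hLL p q, map_smul, LinearMap.smul_apply, map_smul, map_add, hLci, hRci,
      smul_eq_mul] at h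
    simp only [hDdef]
    linear_combination h
  have E2a : ∀ m p q j : ℤ,
      ((p:ℂ) - q) * A m (p+q) j =
        -(2*(q:ℂ) - j) * A m p (j-q) + (2*(p:ℂ) - j) * A m q (j-p) := by
    intro m p q j
    have h := congrArg (cl j) (hf2 (L m) (L p) (L q))
    rw [hLL p q, map_smul, map_smul, map_add, hRcl, hLcl, smul_eq_mul] at h
    simp only [hAdef]
    linear_combination h
  have E2b : ∀ m p q j : ℤ,
      ((p:ℂ) - q) * B m (p+q) j =
        -((q:ℂ) - j) * B m p (j-q) + ((p:ℂ) - j) * B m q (j-p) := by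
    intro m p q j
    have h := congrArg (ci j) (hf2 (L m) (L p) (L q))
    rw [hLL p q, map_smul, map_smul, map_add, hRci, hLci, smul_eq_mul] at h
    simp only [hBdef]
    linear_combination h
  have E2F : ∀ m p q j : ℤ,
      ((p:ℂ) - q) * F m (p+q) j =
        -((q:ℂ) - j) * F m p (j-q) + ((p:ℂ) - j) * F m q (j-p) := by
    intro m p q j
    have h := congrArg (ci j) (hf2 (I m) (L p) (L q))
    rw [hLL p q, map_smul, map_smul, map_add, hRci, hLci, smul_eq_mul] at h
    simp only [hFdef]
    linear_combination h
  have E3a : ∀ p q r j : ℤ,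
      -(q:ℂ) * E (p+q) r j = (2*(p:ℂ) - j) * E q r (j-p) := by
    intro p q r j
    have h := congrArg (cl j) (hf1 (L p) (I q) (L r))
    rw [hLI p q, map_smul, LinearMap.smul_apply, map_smul, map_add, hLcl, hRIcl,
      smul_eq_mul] at h
    simp only [hEdef]
    linear_combination h
  have E3b : ∀ p q r j : ℤ,
      -(q:ℂ) * F (p+q) r j = ((p:ℂ) - j) * F q r (j-p) - (q:ℂ) * A p r (j-q) := by
    intro p q r j
    have h := congrArg (ci j) (hf1 (L p) (I q) (L r))
    rw [hLI p q, map_smul, LinearMap.smul_apply, map_smul, map_add, hLci, hRIci,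
      smul_eq_mul] at h
    simp only [hFdef, hAdef]
    linear_combination h
  have E3H : ∀ p q r j : ℤ,
      -(q:ℂ) * H (p+q) r j = ((p:ℂ) - j) * H q r (j-p) - (q:ℂ) * C p r (j-q) := by
    intro p q r j
    have h := congrArg (ci j) (hf1 (L p) (I q) (I r))
    rw [hLI p q, map_smul, LinearMap.smul_apply, map_smul, map_add, hLci, hRIci,
      smul_eq_mul] at h
    simp only [hHdef, hCdef]
    linear_combination h
  have E4a : ∀ m p q j : ℤ,
      -(q:ℂ) * C m (p+q) j = (2*(p:ℂ) - j) * C m q (j-p) := by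
    intro m p q j
    have h := congrArg (cl j) (hf2 (L m) (L p) (I q))
    rw [hLI p q, map_smul, map_smul, map_add, hRIcl, hLcl, smul_eq_mul] at h
    simp only [hCdef]
    linear_combination h
  have E4b : ∀ m p q j : ℤ,
      -(q:ℂ) * D m (p+q) j = -((q:ℂ) * A m p (j-q)) + ((p:ℂ) - j) * D m q (j-p) := by
    intro m p q j
    have h := congrArg (ci j) (hf2 (L m) (L p) (I q))
    rw [hLI p q, map_smul, map_smul, map_add, hRIci, hLci, smul_eq_mul] at h
    simp only [hDdef, hAdef]
    linear_combination h
  have E4G : ∀ m p q j : ℤ,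
      -(q:ℂ) * G m (p+q) j = (2*(p:ℂ) - j) * G m q (j-p) := by
    intro m p q j
    have h := congrArg (cl j) (hf2 (I m) (L p) (I q))
    rw [hLI p q, map_smul, map_smul, map_add, hRIcl, hLcl, smul_eq_mul] at h
    simp only [hGdef]
    linear_combination h
  have E4H : ∀ m p q j : ℤ,
      -(q:ℂ) * H m (p+q) j = -((q:ℂ) * E m p (j-q)) + ((p:ℂ) - j) * H m q (j-p) := by
    intro m p q j
    have h := congrArg (ci j) (hf2 (I m) (L p) (I q))
    rw [hLI p q, map_smul, map_smul, map_add, hRIci, hLci, smul_eq_mul] at h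
    simp only [hHdef, hEdef]
    linear_combination h
  -- ================== helpers ==================
  have hcz : ∀ (t : ℤ) (x : ℂ), t ≠ 0 → (t:ℂ) * x = 0 → x = 0 := by
    intro t x ht h
    rcases mul_eq_zero.mp h with h' | h'
    · exact absurd (Int.cast_eq_zero.mp h') ht
    · exact h'
  have hsub : ∀ (s t : ℤ) (x : ℂ), s ≠ t → ((s:ℂ) - t) * x = 0 → x = 0 := by
    intro s t x hst h
    refine hcz (s - t) x (by omega) ?_
    push_cast
    linear_combination h

  -- ================== solving: C ≡ 0 ==================
  have hCoff : ∀ m q j : ℤ, j ≠ q → C m q j = 0 := by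
    intro m q j hjq
    have h := E4a m 0 q j
    rw [zero_add, sub_zero] at h
    push_cast at h
    exact hsub j q _ hjq (by linear_combination h)
  have hCrec : ∀ m p q : ℤ, -(q:ℂ) * C m (p+q) (p+q) = ((p:ℂ) - q) * C m q q := by
    intro m p q
    have h := E4a m p q (p+q)
    rw [show p+q-p = q by ring] at h
    push_cast at h
    linear_combination h
  have hCdiag : ∀ m k : ℤ, C m k k = 0 := by
    intro m k
    have h0 : C m 0 0 = 0 := by
      have h := hCrec m 1 0
      push_cast at h
      linear_combination -h
    have h2 : C m 2 2 = 0 := by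
      have h := hCrec m 1 1
      rw [show (1:ℤ)+1 = 2 by norm_num] at h
      push_cast at h
      linear_combination -h
    have h1 : C m 1 1 = 0 := by
      have h := hCrec m (-1) 2
      rw [show (-1:ℤ)+2 = 1 by norm_num] at h
      push_cast at h
      linear_combination (-1/2 : ℂ)*h + (3/2 : ℂ)*h2
    have h := hCrec m (k-1) 1
    rw [show k-1+1 = k by ring] at h
    push_cast at h
    linear_combination -h - ((k:ℂ)-2)*h1
  have hC : ∀ m n j : ℤ, C m n j = 0 := by
    intro m n j
    rcases eq_or_ne j n with rfl | hne
    · exact hCdiag m j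
    · exact hCoff m n j hne
  -- ================== solving: E ≡ 0 ==================
  have hEoff : ∀ q r j : ℤ, j ≠ q → E q r j = 0 := by
    intro q r j hjq
    have h := E3a 0 q r j
    rw [zero_add, sub_zero] at h
    push_cast at h
    exact hsub j q _ hjq (by linear_combination h)
  have hErec : ∀ r p q : ℤ, -(q:ℂ) * E (p+q) r (p+q) = ((p:ℂ) - q) * E q r q := by
    intro r p q
    have h := E3a p q r (p+q)
    rw [show p+q-p = q by ring] at h
    push_cast at h
    linear_combination h
  have hEdiag : ∀ r k : ℤ, E k r k = 0 := by
    intro r k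
    have h0 : E 0 r 0 = 0 := by
      have h := hErec r 1 0
      push_cast at h
      linear_combination -h
    have h2 : E 2 r 2 = 0 := by
      have h := hErec r 1 1
      rw [show (1:ℤ)+1 = 2 by norm_num] at h
      push_cast at h
      linear_combination -h
    have h1 : E 1 r 1 = 0 := by
      have h := hErec r (-1) 2
      rw [show (-1:ℤ)+2 = 1 by norm_num] at h
      push_cast at h
      linear_combination (-1/2 : ℂ)*h + (3/2 : ℂ)*h2
    have h := hErec r (k-1) 1
    rw [show k-1+1 = k by ring] at h
    push_cast at h
    linear_combination -h - ((k:ℂ)-2)*h1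
  have hE : ∀ m n j : ℤ, E m n j = 0 := by
    intro m n j
    rcases eq_or_ne j m with rfl | hne
    · exact hEdiag n j
    · exact hEoff m n j hne
  -- ================== solving: G ≡ 0 ==================
  have hGoff : ∀ m q j : ℤ, j ≠ q → G m q j = 0 := by
    intro m q j hjq
    have h := E4G m 0 q j
    rw [zero_add, sub_zero] at h
    push_cast at h
    exact hsub j q _ hjq (by linear_combination h)
  have hGrec : ∀ m p q : ℤ, -(q:ℂ) * G m (p+q) (p+q) = ((p:ℂ) - q) * G m q q := by
    intro m p q
    have h := E4G m p q (p+q)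
    rw [show p+q-p = q by ring] at h
    push_cast at h
    linear_combination h
  have hGdiag : ∀ m k : ℤ, G m k k = 0 := by
    intro m k
    have h0 : G m 0 0 = 0 := by
      have h := hGrec m 1 0
      push_cast at h
      linear_combination -h
    have h2 : G m 2 2 = 0 := by
      have h := hGrec m 1 1
      rw [show (1:ℤ)+1 = 2 by norm_num] at h
      push_cast at h
      linear_combination -h
    have h1 : G m 1 1 = 0 := by
      have h := hGrec m (-1) 2
      rw [show (-1:ℤ)+2 = 1 by norm_num] at h
      push_cast at h
      linear_combination (-1/2 : ℂ)*h + (3/2 : ℂ)*h2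
    have h := hGrec m (k-1) 1
    rw [show k-1+1 = k by ring] at h
    push_cast at h
    linear_combination -h - ((k:ℂ)-2)*h1
  have hG : ∀ m n j : ℤ, G m n j = 0 := by
    intro m n j
    rcases eq_or_ne j n with rfl | hne
    · exact hGdiag m j
    · exact hGoff m n j hne
  -- ================== solving: H ≡ 0 ==================
  have hHoff1 : ∀ q r j : ℤ, j ≠ q → H q r j = 0 := by
    intro q r j hjq
    have h := E3H 0 q r j
    rw [zero_add, sub_zero, hC] at h
    push_cast at h
    exact hsub j q _ hjq (by linear_combination h)
  have hHoff2 : ∀ m q j : ℤ, j ≠ q → H m q j = 0 := by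
    intro m q j hjq
    have h := E4H m 0 q j
    rw [zero_add, sub_zero, hE] at h
    push_cast at h
    exact hsub j q _ hjq (by linear_combination h)
  have hH : ∀ m n j : ℤ, H m n j = 0 := by
    intro m n j
    rcases eq_or_ne j n with rfl | hne
    · rcases eq_or_ne j m with rfl | hnm
      · -- H j j j
        have hp0 : (j^2+1 : ℤ) ≠ 0 := by positivity
        have hpj : (j^2+1 : ℤ) ≠ j := by nlinarith [sq_nonneg (2*j-1)]
        have h := E4H j (j^2+1) (j - (j^2+1)) j
        rw [show (j^2+1) + (j - (j^2+1)) = j by ring, hE] at h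
        rw [hHoff1 j (j - (j^2+1)) (j - (j^2+1)) (by omega)] at h
        push_cast at h
        refine hsub j (j^2+1) _ (fun hc => hpj hc.symm) ?_
        push_cast
        linear_combination -h
      · exact hHoff1 m j j hnm
    · exact hHoff2 m n j hne
  -- ================== solving: A ==================
  have hAz1 : ∀ m q j : ℤ, ((j:ℂ) - q) * A m q j = -(2*(q:ℂ) - j) * A m 0 (j-q) := by
    intro m q j
    have h := E2a m 0 q j
    rw [zero_add, sub_zero] at h
    push_cast at h
    linear_combination h
  have hAz2 : ∀ q r j : ℤ, ((j:ℂ) - q) * A q r j = -(2*(q:ℂ) - j) * A 0 r (j-q) := by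
    intro q r j
    have h := E1a 0 q r j
    rw [zero_add, sub_zero] at h
    push_cast at h
    linear_combination h
  have hAm00 : ∀ m : ℤ, A m 0 0 = 0 := by
    intro m
    have h := hAz1 m 1 1
    rw [show (1:ℤ)-1 = 0 by norm_num] at h
    push_cast at h
    linear_combination h
  have hA00t : ∀ t : ℤ, A 0 0 t = 0 := by
    intro t
    rcases eq_or_ne t 0 with rfl | ht
    · exact hAm00 0
    · have h := hAz2 (-t) 0 0
      rw [show (0:ℤ) - (-t) = t by ring, hAm00 (-t)] at h
      push_cast at h
      refine hcz (2*t) _ (by omega) ?_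
      push_cast
      linear_combination -h
  have hAq0 : ∀ q j : ℤ, j ≠ q → A q 0 j = 0 := by
    intro q j hjq
    have h := hAz2 q 0 j
    rw [hA00t] at h
    exact hsub j q _ hjq (by linear_combination h)
  have hA0q : ∀ q j : ℤ, j ≠ q → A 0 q j = 0 := by
    intro q j hjq
    have h := hAz1 0 q j
    rw [hA00t] at h
    exact hsub j q _ hjq (by linear_combination h)
  have hAoff1 : ∀ q r j : ℤ, j ≠ q → j ≠ q + r → A q r j = 0 := by
    intro q r j h1 h2
    have h := hAz2 q r j
    rw [hA0q r (j-q) (by omega)] at h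
    exact hsub j q _ h1 (by linear_combination h)
  have hAdiag3 : ∀ q r : ℤ, r ≠ 0 → r ≠ q → A q r q = 0 := by
    intro q r h0 hq
    have h := hAz1 q r q
    rw [hAq0 q (q-r) (by omega)] at h
    exact hsub q r _ (fun hc => hq hc.symm) (by linear_combination h)
  have hAqq : ∀ q : ℤ, q ≠ 0 → A q q q = 0 := by
    intro q hq
    have h := E1a (2*q) (-q) q q
    rw [show 2*q + -q = q by ring, show q - 2*q = -q by ring, show q - -q = 2*q by ring] at h
    rw [hAdiag3 (-q) q hq (by omega), hAdiag3 (2*q) q hq (by omega)] at h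
    push_cast at h
    refine hcz (3*q) _ (by omega) ?_
    push_cast
    linear_combination h
  have hAoff : ∀ m n j : ℤ, j ≠ m + n → A m n j = 0 := by
    intro m n j hj
    by_cases hjm : j = m
    · subst hjm
      by_cases hnm : n = j
      · subst hnm
        exact hAqq n (by omega)
      · exact hAdiag3 j n (by omega) hnm
    · exact hAoff1 m n j hjm hj
  -- D preliminary facts
  have hDrel : ∀ m n j : ℤ, ((j:ℂ) - n) * D m n j = -((n:ℂ) * A m 0 (j-n)) := by
    intro m n j
    have h := E4b m 0 n j
    rw [zero_add, sub_zero] at h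
    push_cast at h
    linear_combination h
  have hDsupp : ∀ m n j : ℤ, j ≠ n → j ≠ m + n → D m n j = 0 := by
    intro m n j h1 h2
    have h := hDrel m n j
    rw [hAq0 m (j-n) (by omega)] at h
    exact hsub j n _ h1 (by linear_combination h)
  have hDdiagmul : ∀ m n : ℤ, (m:ℂ) * D m n (m+n) = -((n:ℂ) * A m 0 m) := by
    intro m n
    have h := hDrel m n (m+n)
    rw [show m+n-n = m by ring] at h
    push_cast at h
    linear_combination h
  -- lambda
  have pP : ∀ p q : ℤ, p ≠ 0 → q ≠ 0 → p + q ≠ 0 →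
      (p:ℂ) * A q 0 q = (q:ℂ) * A p 0 p := by
    intro p q hp hq hpq
    have g : ∀ r : ℤ, ((p:ℂ)*q*((p:ℂ)-q))*(-((r:ℂ)*A (p+q) 0 (p+q))) =
        (p:ℂ)*((p:ℂ)+q)*((q:ℂ)+r)*((r:ℂ)*A q 0 q)
          - (q:ℂ)*((p:ℂ)+q)*((p:ℂ)+r)*((r:ℂ)*A p 0 p) := by
      intro r
      have hr := E1D p q r (p+q+r)
      rw [show p+q+r-p = q+r by ring, show p+q+r-q = p+r by ring] at hr
      have d1 := hDdiagmul (p+q) r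
      have d2 := hDdiagmul q r
      have d3 := hDdiagmul p r
      push_cast at hr d1 d2 d3
      linear_combination ((p:ℂ)*q*((p:ℂ)+q))*hr - ((p:ℂ)*q*((p:ℂ)-q))*d1
        - ((p:ℂ)*((p:ℂ)+q)*((q:ℂ)+r))*d2 + ((q:ℂ)*((p:ℂ)+q)*((p:ℂ)+r))*d3
    have g1 := g 1
    have g2 := g 2
    push_cast at g1 g2
    have hpq' : ((p:ℂ) + q) ≠ 0 := by
      have : ((p+q:ℤ):ℂ) ≠ 0 := Int.cast_ne_zero.mpr hpq
      push_cast at this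
      exact this
    have key : ((p:ℂ)+q) * ((p:ℂ)*A q 0 q - (q:ℂ)*A p 0 p) = 0 := by
      linear_combination g1 - (1/2 : ℂ)*g2
    exact sub_eq_zero.mp ((mul_eq_zero.mp key).resolve_left hpq')
  set lam : ℂ := A 1 0 1 with hlamdef
  have hPm : ∀ m : ℤ, A m 0 m = lam * m := by
    intro m
    by_cases h0 : m = 0
    · subst h0
      rw [hA00t 0]
      push_cast
      ring
    · by_cases h1 : m = -1
      · subst h1
        have hP2 : A 2 0 2 = 2 * lam := by
          have h := pP 2 1 (by norm_num) (by norm_num) (by norm_num)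
          push_cast at h
          linear_combination -h
        have h := pP (-1) 2 (by norm_num) (by norm_num) (by norm_num)
        push_cast at h ⊢
        linear_combination (-1/2 : ℂ)*h - (1/2 : ℂ)*hP2
      · have h := pP m 1 h0 (by norm_num) (by omega)
        push_cast at h
        linear_combination -h
  have hAdiagm : ∀ m p : ℤ, m ≠ 0 → A m p (m+p) = lam * ((m:ℂ) - p) := by
    intro m p hm
    have h := E4b m p 1 (m+p+1)
    rw [show m+p+1-1 = m+p by ring, show m+p+1-p = m+1 by ring] at h
    have d1 := hDdiagmul m (p+1)
    rw [show m+(p+1) = m+p+1 by ring] at d1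
    have d2 := hDdiagmul m 1
    have pm := hPm m
    push_cast at h d1 d2
    have big : (m:ℂ) * A m p (m+p) = (m:ℂ) * (lam * ((m:ℂ) - p)) := by
      linear_combination ((m:ℂ))*h + d1 - ((m:ℂ)+1)*d2 + ((m:ℂ)-(p:ℂ))*pm
    exact mul_left_cancel₀ (Int.cast_ne_zero.mpr hm) big
  have hAdiag0 : ∀ r : ℤ, A 0 r r = -(lam * r) := by
    intro r
    have h := E1a 1 (-1) r r
    rw [show (1:ℤ) + -1 = 0 by norm_num, show r - -1 = r+1 by ring] at h
    have i1 := hAdiagm (-1) r (by norm_num)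
    rw [show (-1) + r = r - 1 by ring] at i1
    have i2 := hAdiagm 1 r (by norm_num)
    rw [show (1:ℤ) + r = r + 1 by ring] at i2
    push_cast at h i1 i2
    linear_combination (1/2 : ℂ)*h + ((2-(r:ℂ))/2)*i1 + ((2+(r:ℂ))/2)*i2
  have hAfull : ∀ m n j : ℤ, A m n j = if j = m + n then lam * ((m:ℂ) - n) else 0 := by
    intro m n j
    by_cases hj : j = m + n
    · rw [if_pos hj]
      subst hj
      by_cases hm : m = 0
      · subst hm
        rw [zero_add, hAdiag0 n]
        push_cast
        ring
      · exact hAdiagm m n hm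
    · rw [if_neg hj]
      exact hAoff m n j hj
  -- ================== solving: D ==================
  have hDdiagv : ∀ m n : ℤ, m ≠ 0 → D m n (m+n) = -(lam * n) := by
    intro m n hm
    have h := hDdiagmul m n
    rw [hPm m] at h
    refine mul_left_cancel₀ (Int.cast_ne_zero.mpr hm : ((m:ℤ):ℂ) ≠ 0) ?_
    linear_combination h
  have hDfull : ∀ m n j : ℤ, D m n j = if j = m + n then -(lam * n) else 0 := by
    intro m n j
    by_cases hj : j = m + n
    · rw [if_pos hj]
      subst hj
      by_cases hm : m = 0
      · subst hm
        rw [zero_add]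
        have h := E1D 1 (-1) n n
        rw [show (1:ℤ) + -1 = 0 by norm_num, show n - -1 = n+1 by ring] at h
        have v1 := hDdiagv (-1) n (by norm_num)
        rw [show (-1) + n = n - 1 by ring] at v1
        have v2 := hDdiagv 1 n (by norm_num)
        rw [show (1:ℤ) + n = n + 1 by ring] at v2
        push_cast at h v1 v2 ⊢
        linear_combination (1/2 : ℂ)*h + ((1-(n:ℂ))/2)*v1 + ((1+(n:ℂ))/2)*v2
      · exact hDdiagv m n hm
    · rw [if_neg hj]
      by_cases hn : j = n
      · subst hn
        have hm : m ≠ 0 := by omega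
        have h := E1D (2*m) (-m) j j
        rw [show 2*m + -m = m by ring, show j - -m = j+m by ring] at h
        rw [hDsupp (-m) j (j-2*m) (by omega) (by omega),
          hDsupp (2*m) j (j+m) (by omega) (by omega)] at h
        push_cast at h
        refine hcz (3*m) _ (by omega) ?_
        push_cast
        linear_combination h
      · exact hDsupp m n j hn hj

  -- ================== solving: F ==================
  have hFrel : ∀ q r j : ℤ, ((j:ℂ) - q) * F q r j = -((q:ℂ) * A 0 r (j-q)) := by
    intro q r j
    have h := E3b 0 q r j
    rw [zero_add, sub_zero] at h
    push_cast at h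
    linear_combination h
  have hFsupp : ∀ q r j : ℤ, j ≠ q → j ≠ q + r → F q r j = 0 := by
    intro q r j h1 h2
    have h := hFrel q r j
    rw [hAfull 0 r (j-q), if_neg (by omega)] at h
    exact hsub j q _ h1 (by linear_combination h)
  have hFg : ∀ m r : ℤ, r ≠ 0 → F m r m = 0 := by
    intro m r hr
    have h := E2F m (2*r) (-r) m
    rw [show 2*r + -r = r by ring, show m - -r = m + r by ring] at h
    rw [hFsupp m (2*r) (m+r) (by omega) (by omega),
      hFsupp m (-r) (m-2*r) (by omega) (by omega)] at h
    push_cast at h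
    refine hcz (3*r) _ (by omega) ?_
    push_cast
    linear_combination h
  have hFoff : ∀ m n j : ℤ, j ≠ m + n → F m n j = 0 := by
    intro m n j hj
    by_cases hjm : j = m
    · subst hjm
      exact hFg j n (by omega)
    · exact hFsupp m n j hjm hj
  have hFdiag1 : ∀ q r : ℤ, r ≠ 0 → F q r (q+r) = lam * q := by
    intro q r hr
    have h := hFrel q r (q+r)
    rw [show q+r-q = r by ring, hAfull 0 r r, if_pos (by omega)] at h
    push_cast at h
    refine mul_left_cancel₀ (Int.cast_ne_zero.mpr hr : ((r:ℤ):ℂ) ≠ 0) ?_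
    push_cast
    linear_combination h
  have hFshift : ∀ m q j : ℤ, j ≠ q → F m q j = F m 0 (j-q) := by
    intro m q j hjq
    have h := E2F m 0 q j
    rw [zero_add, sub_zero] at h
    push_cast at h
    have h2 : ((j:ℂ)-q) * (F m q j - F m 0 (j-q)) = 0 := by linear_combination h
    exact sub_eq_zero.mp (hsub j q _ hjq h2)
  have hFm0 : ∀ m : ℤ, m ≠ 0 → F m 0 m = lam * m := by
    intro m hm
    have h := hFshift m 1 (m+1) (by omega)
    rw [show m+1-1 = m by ring] at h
    rw [hFdiag1 m 1 one_ne_zero] at h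
    exact h.symm
  have hF00 : F 0 0 0 = 0 := by
    have h := E3b 1 (-1) 0 0
    rw [show (1:ℤ) + -1 = 0 by norm_num, show (0:ℤ) - 1 = -1 by norm_num,
      show (0:ℤ) - -1 = 1 by norm_num] at h
    rw [hFm0 (-1) (by norm_num)] at h
    rw [hAfull 1 0 1, if_pos (by norm_num)] at h
    push_cast at h
    linear_combination h
  have hFfull : ∀ m n j : ℤ, F m n j = if j = m + n then lam * m else 0 := by
    intro m n j
    by_cases hj : j = m + n
    · rw [if_pos hj]
      subst hj
      by_cases hm : m = 0
      · subst hm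
        rw [zero_add]
        by_cases hn : n = 0
        · subst hn
          rw [hF00]
          push_cast
          ring
        · have h := hFrel 0 n n
          rw [sub_zero] at h
          push_cast at h
          have : F 0 n n = 0 := hcz n _ hn (by linear_combination h)
          rw [this]
          push_cast
          ring
      · by_cases hn : n = 0
        · subst hn
          rw [add_zero]
          exact hFm0 m hm
        · exact hFdiag1 m n hn
    · rw [if_neg hj]
      exact hFoff m n j hj
  -- ================== solving: B ==================
  have hBsh2 : ∀ m q j : ℤ, j ≠ q → B m q j = B m 0 (j-q) := by
    intro m q j hjq
    have h := E2b m 0 q j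
    rw [zero_add, sub_zero] at h
    push_cast at h
    have h2 : ((j:ℂ)-q) * (B m q j - B m 0 (j-q)) = 0 := by linear_combination h
    exact sub_eq_zero.mp (hsub j q _ hjq h2)
  have hBsh1 : ∀ q r j : ℤ, j ≠ q → B q r j = B 0 r (j-q) := by
    intro q r j hjq
    have h := E1b 0 q r j
    rw [zero_add, sub_zero] at h
    push_cast at h
    have h2 : ((j:ℂ)-q) * (B q r j - B 0 r (j-q)) = 0 := by linear_combination h
    exact sub_eq_zero.mp (hsub j q _ hjq h2)
  have hBoff : ∀ m n j : ℤ, j ≠ n → j ≠ m + n → B m n j = B 0 0 (j-m-n) := by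
    intro m n j h1 h2
    rw [hBsh2 m n j h1, hBsh1 m 0 (j-n) (by omega), show j-n-m = j-m-n by ring]
  have hBm0m : ∀ m : ℤ, m ≠ 0 → B m 0 m = B 0 1 1 := by
    intro m hm
    have h1 := hBsh2 m 1 (m+1) (by omega)
    rw [show m+1-1 = m by ring] at h1
    have h2 := hBsh1 m 1 (m+1) (by omega)
    rw [show m+1-m = 1 by ring] at h2
    exact h1.symm.trans h2
  have hB0nn : ∀ n : ℤ, n ≠ 0 → B 0 n n = B 0 1 1 := by
    intro n hn
    have h1 := hBsh1 1 n (1+n) (by omega)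
    rw [show 1+n-1 = n by ring] at h1
    have h2 := hBsh2 1 n (1+n) (by omega)
    rw [show 1+n-n = 1 by ring] at h2
    exact h1.symm.trans (h2.trans (hBm0m 1 one_ne_zero))
  have hB000 : B 0 0 0 = B 0 1 1 := by
    have h := E2b 0 1 (-1) 0
    rw [show (1:ℤ) + -1 = 0 by norm_num, show (0:ℤ) - -1 = 1 by norm_num,
      show (0:ℤ) - 1 = -1 by norm_num] at h
    rw [hB0nn (-1) (by norm_num)] at h
    push_cast at h
    linear_combination (1/2 : ℂ)*h
  have hBfull : ∀ m n j : ℤ, B m n j = B 0 0 (j-m-n) := by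
    intro m n j
    by_cases h1 : j = m + n
    · subst h1
      rw [show m+n-m-n = 0 by ring]
      by_cases hm : m = 0
      · subst hm
        rw [zero_add]
        by_cases hn : n = 0
        · subst hn
          rfl
        · rw [hB0nn n hn, hB000]
      · rw [hBsh2 m n (m+n) (by omega), show m+n-n = m by ring, hBm0m m hm, hB000]
    · by_cases h2 : j = n
      · subst h2
        have hm : m ≠ 0 := by omega
        by_cases h3 : j = m
        · subst h3
          have h := E1b (2*j) (-j) j j
          rw [show 2*j + -j = j by ring, show j - 2*j = -j by ring,
            show j - -j = 2*j by ring] at h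
          rw [hBoff (-j) j (-j) (by omega) (by omega), show -j - -j - j = -j by ring] at h
          rw [hBoff (2*j) j (2*j) (by omega) (by omega), show 2*j - 2*j - j = -j by ring] at h
          push_cast at h
          have h4 : ((3*j:ℤ):ℂ) * (B j j j - B 0 0 (j-j-j)) = 0 := by
            rw [show j-j-j = -j by ring]
            push_cast
            linear_combination h
          exact sub_eq_zero.mp (hcz (3*j) _ (by omega) h4)
        · rw [hBsh1 m j j h3, hBsh2 0 j (j-m) (by omega), show j-m-j = j-m-j by ring]
      · exact hBoff m n j h2 h1

  -- ================== element-level identities ==================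
  set mu : ℤ →₀ ℂ := (b.repr ((f (L 0)) (L 0))).comapDomain Sum.inr
    (Sum.inr_injective.injOn) with hmudef
  have hmuval : ∀ k : ℤ, mu k = B 0 0 k := by
    intro k
    simp [hmudef, Finsupp.comapDomain_apply, hBdef, hcidef, Module.Basis.coord_apply]
  have hfLL : ∀ m n : ℤ, f (L m) (L n) = (lam * ((m:ℂ) - n)) • L (m+n)
      + mu.sum (fun k c => c • I (m+n+k)) := by
    intro m n
    refine hext _ _ ?_ ?_
    · intro j
      have hA' := hAfull m n j
      simp only [hAdef] at hA'
      rw [hA', map_add, map_smul, hclL0, map_finsuppSum, Finsupp.sum,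
        Finset.sum_eq_zero (fun k _ => by rw [map_smul, hclI0, smul_zero]),
        add_zero, smul_eq_mul]
      split_ifs <;> first | ring1 | omega
    · intro j
      have hB' := hBfull m n j
      simp only [hBdef] at hB'
      have hμ' := hmuval (j-m-n)
      simp only [hBdef] at hμ'
      rw [hB', map_add, map_smul, hciL0, smul_zero, zero_add, map_finsuppSum]
      rw [Finsupp.sum_eq_single (j-m-n)
        (fun k _ hk => by rw [map_smul, hciI0, if_neg (by omega), smul_zero])
        (fun _ => by rw [zero_smul, map_zero])]
      rw [map_smul, hciI0, if_pos (by omega : m+n+(j-m-n) = j), smul_eq_mul, mul_one]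
      exact hμ'.symm
  have hfLI : ∀ m n : ℤ, f (L m) (I n) = (-(lam * (n:ℂ))) • I (m+n) := by
    intro m n
    refine hext _ _ ?_ ?_
    · intro j
      have h := hC m n j
      simp only [hCdef] at h
      rw [h, map_smul, hclI0, smul_zero]
    · intro j
      have h := hDfull m n j
      simp only [hDdef] at h
      rw [h, map_smul, hciI0, smul_eq_mul]
      split_ifs <;> first | ring1 | omega
  have hfIL : ∀ m n : ℤ, f (I m) (L n) = (lam * (m:ℂ)) • I (m+n) := by
    intro m n
    refine hext _ _ ?_ ?_
    · intro j
      have h := hE m n j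
      simp only [hEdef] at h
      rw [h, map_smul, hclI0, smul_zero]
    · intro j
      have h := hFfull m n j
      simp only [hFdef] at h
      rw [h, map_smul, hciI0, smul_eq_mul]
      split_ifs <;> first | ring1 | omega
  have hfII : ∀ m n : ℤ, f (I m) (I n) = 0 := by
    intro m n
    refine hext _ _ ?_ ?_
    · intro j
      have h := hG m n j
      simp only [hGdef] at h
      rw [h, map_zero]
    · intro j
      have h := hH m n j
      simp only [hHdef] at h
      rw [h, map_zero]
  -- ================== part II ==================
  have hgenL : ∀ (q : ℤ) (y : W), f (I q) y = lam • ⁅I q, y⁆ := by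
    intro q y
    have h : f (I q) = lam • ((LieAlgebra.ad ℂ W) (I q) : W →ₗ[ℂ] W) := by
      apply b.ext
      rintro (r | r)
      · rw [← hL r, LinearMap.smul_apply, LieAlgebra.ad_apply, hfIL q r,
          ← lie_skew, hLI r q, show q + r = r + q from add_comm q r,
          smul_neg, smul_smul, ← neg_smul]
        congr 1
        ring
      · rw [← hI r, LinearMap.smul_apply, LieAlgebra.ad_apply, hfII q r, hII q r, smul_zero]
    rw [h, LinearMap.smul_apply, LieAlgebra.ad_apply]
  have hgenR : ∀ (q : ℤ) (x : W), f x (I q) = lam • ⁅x, I q⁆ := by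
    intro q x
    have h : f.flip (I q) = (-lam) • ((LieAlgebra.ad ℂ W) (I q) : W →ₗ[ℂ] W) := by
      apply b.ext
      rintro (r | r)
      · rw [← hL r, LinearMap.smul_apply, LieAlgebra.ad_apply, LinearMap.flip_apply,
          hfLI r q, ← lie_skew, hLI r q, smul_neg, smul_smul, ← neg_smul]
        congr 1
        ring
      · rw [← hI r, LinearMap.smul_apply, LieAlgebra.ad_apply, LinearMap.flip_apply,
          hfII r q, hII q r, smul_zero]
    have h2 := LinearMap.congr_fun h x
    rw [LinearMap.flip_apply, LinearMap.smul_apply, LieAlgebra.ad_apply] at h2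
    rw [h2, ← lie_skew, smul_neg, neg_smul, neg_neg]
  refine ⟨lam, mu, fun m n => ⟨hfLL m n, hfLI m n, ?_, hfII m n⟩, ?_⟩
  · have := hfIL n m
    rwa [show n + m = m + n from add_comm n m] at this
  · rintro x y (hx | hy)
    · induction hx using Submodule.span_induction with
      | mem z hz =>
        obtain ⟨q, rfl⟩ := hz
        exact hgenL q y
      | zero => simp
      | add a c _ _ ha hc =>
        rw [map_add, LinearMap.add_apply, ha, hc, add_lie, smul_add]
      | smul t a _ ha =>
        rw [map_smul, LinearMap.smul_apply, ha, smul_lie, smul_comm]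
    · induction hy using Submodule.span_induction with
      | mem z hz =>
        obtain ⟨q, rfl⟩ := hz
        exact hgenR q x
      | zero => simp
      | add a c _ _ ha hc =>
        rw [map_add, ha, hc, lie_add, smul_add]
      | smul t a _ ha =>
        rw [map_smul, ha, lie_smul, smul_comm]
end

section
/- A linear map φ : ℋ → ℋ on the twisted Heisenberg–Virasoro algebra is commuting (i.e. [φ(x), x] = 0 for all x ∈ ℋ) if and only if there exist λ ∈ ℂ and a linear map τ : ℋ → Z(ℋ) into the center of ℋ such that φ(x) = λ·x + τ(x) for all x ∈ ℋ; equivalently, φ(x) − λ·x ∈ Z(ℋ) for all x ∈ ℋ. -/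
/-- Theorem 4.1: a linear map `φ` on the twisted Heisenberg–Virasoro algebra `ℋ` is
commuting (`[φ(x), x] = 0` for all `x`) if and only if there exist `λ ∈ ℂ` and a linear map
`τ : ℋ → Z(ℋ)` such that `φ(x) = λ·x + τ(x)` for all `x ∈ ℋ`. -/
theorem stmt10 {H : Type*} [LieRing H] [LieAlgebra ℂ H]
    (b : Module.Basis (ℤ ⊕ ℤ ⊕ Fin 3) ℂ H)
    (L I : ℤ → H) (C₁ C₂ C₃ : H)
    (hL : ∀ n : ℤ, L n = b (Sum.inl n))
    (hI : ∀ n : ℤ, I n = b (Sum.inr (Sum.inl n)))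
    (hC₁ : C₁ = b (Sum.inr (Sum.inr 0)))
    (hC₂ : C₂ = b (Sum.inr (Sum.inr 1)))
    (hC₃ : C₃ = b (Sum.inr (Sum.inr 2)))
    (hLL : ∀ n m : ℤ, ⁅L n, L m⁆ = ((n : ℂ) - (m : ℂ)) • L (n + m)
        + (if n = -m then (((n : ℂ) ^ 3 - (n : ℂ)) / 12) • C₁ else 0))
    (hLI : ∀ n m : ℤ, ⁅L n, I m⁆ = (-(m : ℂ)) • I (n + m)
        - (if n = -m then ((n : ℂ) ^ 2 + (n : ℂ)) • C₂ else 0))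
    (hII : ∀ n m : ℤ, ⁅I n, I m⁆ = if n = -m then (n : ℂ) • C₃ else 0)
    (hC : ∀ x : H, ⁅x, C₁⁆ = 0 ∧ ⁅x, C₂⁆ = 0 ∧ ⁅x, C₃⁆ = 0)
    (φ : H →ₗ[ℂ] H) :
    (∀ x : H, ⁅φ x, x⁆ = 0) ↔
      ∃ (lam : ℂ) (τ : H →ₗ[ℂ] H),
        (∀ x : H, τ x ∈ LieAlgebra.center ℂ H) ∧
        (∀ x : H, φ x = lam • x + τ x) := by
  have memcent : ∀ x : H, (∀ y : H, ⁅y, x⁆ = 0) → x ∈ LieAlgebra.center ℂ H := by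
    intro x hx
    exact (LieModule.mem_maxTrivSubmodule ℂ H H x).2 hx
  constructor
  · intro hcomm
    -- the three central elements C₁, C₂, C₃ are basis vectors
    have hcent : ∀ (s : Fin 3) (y : H), ⁅y, b (Sum.inr (Sum.inr s))⁆ = 0 := by
      intro s y
      fin_cases s
      · exact hC₁ ▸ (hC y).1
      · exact hC₂ ▸ (hC y).2.1
      · exact hC₃ ▸ (hC y).2.2
    -- generic principle to compute coefficients of brackets
    have rep : ∀ (y : H) (idx idx' : ℤ ⊕ ℤ ⊕ Fin 3) (c : ℂ),
        (∀ j, b.repr ⁅y, b j⁆ idx = c * b.repr (b j) idx') →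
        ∀ x : H, b.repr ⁅y, x⁆ idx = c * b.repr x idx' := by
      intro y idx idx' c hb x
      have key : (Finsupp.lapply idx ∘ₗ (b.repr.toLinearMap ∘ₗ
            ((LieAlgebra.ad ℂ H y : H →ₗ[ℂ] H))))
          = c • (Finsupp.lapply idx' ∘ₗ b.repr.toLinearMap) := by
        apply b.ext; intro j
        simpa using hb j
      simpa using DFunLike.congr_fun key x
    -- F1 : L-coefficients of ⁅L m, x⁆
    have F1 : ∀ (m p : ℤ) (x : H), b.repr ⁅L m, x⁆ (Sum.inl p)
        = ((2*m - p : ℤ) : ℂ) * b.repr x (Sum.inl (p - m)) := by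
      intro m p
      apply rep
      intro j
      rcases j with k | k | s
      · rw [← hL k, hLL]
        rcases eq_or_ne k (p - m) with rfl | hk
        · have e1 : m + (p - m) = p := by ring
          rw [e1]
          split_ifs with h <;>
            simp [hL, hI, hC₁, b.repr_self, Finsupp.single_apply] <;> push_cast <;> ring
        · have h1 : m + k ≠ p := by omega
          split_ifs with h <;>
            simp [hL, hI, hC₁, b.repr_self, Finsupp.single_apply, h1, hk]
      · rw [← hI k, hLI]
        split_ifs with h <;>
          simp [hI, hC₂, b.repr_self, Finsupp.single_apply]
      · rw [hcent s (L m), map_zero]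
        simp [b.repr_self, Finsupp.single_apply]
    -- F2 : I-coefficients of ⁅L m, x⁆
    have F2 : ∀ (m p : ℤ) (x : H), b.repr ⁅L m, x⁆ (Sum.inr (Sum.inl p))
        = (-((p - m : ℤ) : ℂ)) * b.repr x (Sum.inr (Sum.inl (p - m))) := by
      intro m p
      apply rep
      intro j
      rcases j with k | k | s
      · rw [← hL k, hLL]
        split_ifs with h <;>
          simp [hL, hC₁, b.repr_self, Finsupp.single_apply]
      · rw [← hI k, hLI]
        rcases eq_or_ne k (p - m) with rfl | hk
        · have e1 : m + (p - m) = p := by ring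
          rw [e1]
          split_ifs with h <;>
            simp [hI, hC₂, b.repr_self, Finsupp.single_apply] <;> push_cast <;> ring
        · have h1 : m + k ≠ p := by omega
          split_ifs with h <;>
            simp [hI, hC₂, b.repr_self, Finsupp.single_apply, h1, hk]
      · rw [hcent s (L m), map_zero]
        simp [b.repr_self, Finsupp.single_apply]
    -- F3 : I-coefficients of ⁅I m, x⁆
    have F3 : ∀ (m p : ℤ) (x : H), b.repr ⁅I m, x⁆ (Sum.inr (Sum.inl p))
        = ((m : ℤ) : ℂ) * b.repr x (Sum.inl (p - m)) := by
      intro m p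
      apply rep
      intro j
      rcases j with k | k | s
      · rw [← hL k, ← lie_skew, hLI]
        rcases eq_or_ne k (p - m) with rfl | hk
        · have e1 : (p - m) + m = p := by ring
          rw [e1]
          split_ifs with h <;>
            simp [hL, hI, hC₂, b.repr_self, Finsupp.single_apply] <;> push_cast <;> ring
        · have h1 : k + m ≠ p := by omega
          split_ifs with h <;>
            simp [hL, hI, hC₂, b.repr_self, Finsupp.single_apply, h1, hk]
      · rw [← hI k, hII]
        split_ifs with h <;>
          simp [hI, hC₃, b.repr_self, Finsupp.single_apply]
      · rw [hcent s (I m), map_zero]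
        simp [b.repr_self, Finsupp.single_apply]
    -- F5 : L-coefficients of ⁅I m, x⁆ vanish
    have F5 : ∀ (m p : ℤ) (x : H), b.repr ⁅I m, x⁆ (Sum.inl p) = 0 := by
      intro m p x
      have := rep (I m) (Sum.inl p) (Sum.inl p) 0 ?_ x
      · simpa using this
      intro j
      rcases j with k | k | s
      · rw [← hL k, ← lie_skew, hLI]
        split_ifs with h <;>
          simp [hI, hC₂, b.repr_self, Finsupp.single_apply]
      · rw [← hI k, hII]
        split_ifs with h <;>
          simp [hC₃, b.repr_self, Finsupp.single_apply]
      · rw [hcent s (I m), map_zero]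
        simp
    -- polarization
    have pol : ∀ x y : H, ⁅φ x, y⁆ = ⁅x, φ y⁆ := by
      intro x y
      have h0 := hcomm (x + y)
      rw [map_add, add_lie, lie_add, lie_add, hcomm x, hcomm y, zero_add, add_zero] at h0
      rw [← lie_skew x (φ y)]
      exact eq_neg_of_add_eq_zero_left h0
    have hLphiL : ∀ n : ℤ, ⁅L n, φ (L n)⁆ = 0 := by
      intro n
      rw [← lie_skew (L n) (φ (L n)), hcomm, neg_zero]
    -- diagonal coefficients of φ(L n): off-diagonal vanish
    have hA0 : ∀ n q : ℤ, q ≠ n → b.repr (φ (L n)) (Sum.inl q) = 0 := by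
      intro n q hq
      have h1 := F1 n (q + n) (φ (L n))
      rw [hLphiL n, map_zero, Finsupp.coe_zero, Pi.zero_apply] at h1
      have e1 : q + n - n = q := by ring
      rw [e1] at h1
      have h2 : ((2*n - (q + n) : ℤ) : ℂ) ≠ 0 := by
        rw [Int.cast_ne_zero]; omega
      rcases mul_eq_zero.1 h1.symm with h | h
      · exact absurd h h2
      · exact h
    have hB0 : ∀ n q : ℤ, q ≠ 0 → b.repr (φ (L n)) (Sum.inr (Sum.inl q)) = 0 := by
      intro n q hq
      have h1 := F2 n (q + n) (φ (L n))
      rw [hLphiL n, map_zero, Finsupp.coe_zero, Pi.zero_apply] at h1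
      have e1 : q + n - n = q := by ring
      rw [e1] at h1
      have h2 : (-((q : ℤ) : ℂ)) ≠ 0 := by
        rw [neg_ne_zero, Int.cast_ne_zero]; omega
      rcases mul_eq_zero.1 h1.symm with h | h
      · exact absurd h h2
      · exact h
    -- mixed polarization identities
    have hbr : ∀ n m : ℤ, ⁅I m, φ (L n)⁆ = -⁅L n, φ (I m)⁆ := by
      intro n m
      rw [← pol (L n) (I m)]
      exact (lie_skew (I m) (φ (L n))).symm
    have MI : ∀ n m p : ℤ, ((m : ℤ) : ℂ) * b.repr (φ (L n)) (Sum.inl (p - m))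
        = ((p - n : ℤ) : ℂ) * b.repr (φ (I m)) (Sum.inr (Sum.inl (p - n))) := by
      intro n m p
      have h1 := F3 m p (φ (L n))
      have h2 := F2 n p (φ (I m))
      rw [hbr n m, map_neg, Finsupp.neg_apply, h2] at h1
      rw [← h1]; ring
    have ML : ∀ n m p : ℤ, ((2*n - p : ℤ) : ℂ)
        * b.repr (φ (I m)) (Sum.inl (p - n)) = 0 := by
      intro n m p
      have h1 := F5 m p (φ (L n))
      have h2 := F1 n p (φ (I m))
      rw [hbr n m, map_neg, Finsupp.neg_apply, h2] at h1
      exact neg_eq_zero.1 h1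
    -- diagonal coefficient of φ(L n) is independent of n
    have hAdiag : ∀ n : ℤ, b.repr (φ (L n)) (Sum.inl n)
        = b.repr (φ (L 0)) (Sum.inl 0) := by
      have key : ∀ n : ℤ, b.repr (φ (L n)) (Sum.inl n)
          = b.repr (φ (I 1)) (Sum.inr (Sum.inl 1)) := by
        intro n
        have h1 := MI n 1 (n + 1)
        have e1 : n + 1 - 1 = n := by ring
        have e2 : n + 1 - n = 1 := by ring
        rw [e1, e2] at h1
        simpa using h1
      intro n
      rw [key n, ← key 0]
    -- L-coefficients of φ(I m) vanish
    have hD : ∀ m q : ℤ, b.repr (φ (I m)) (Sum.inl q) = 0 := by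
      intro m q
      have h1 := ML (q + 1) m (2*q + 1)
      have e1 : 2*q + 1 - (q + 1) = q := by ring
      have e2 : 2*(q + 1) - (2*q + 1) = 1 := by ring
      rw [e1, e2] at h1
      simpa using h1
    -- I-coefficients of φ(I m)
    have hE : ∀ m q : ℤ, q ≠ 0 → q ≠ m → b.repr (φ (I m)) (Sum.inr (Sum.inl q)) = 0 := by
      intro m q hq hqm
      have h1 := MI 0 m q
      rw [hA0 0 (q - m) (by omega)] at h1
      have e1 : q - 0 = q := by ring
      rw [e1, mul_zero] at h1
      have h2 : ((q : ℤ) : ℂ) ≠ 0 := by rw [Int.cast_ne_zero]; omega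
      rcases mul_eq_zero.1 h1.symm with h | h
      · exact absurd h h2
      · exact h
    have hEd : ∀ m : ℤ, m ≠ 0 → b.repr (φ (I m)) (Sum.inr (Sum.inl m))
        = b.repr (φ (L 0)) (Sum.inl 0) := by
      intro m hm
      have h1 := MI 0 m m
      have e1 : m - m = 0 := by ring
      have e2 : m - 0 = m := by ring
      rw [e1, e2] at h1
      have h2 : ((m : ℤ) : ℂ) ≠ 0 := by rw [Int.cast_ne_zero]; omega
      exact (mul_left_cancel₀ h2 h1).symm
    -- central elements
    have hI0 : ∀ y : H, ⁅y, I 0⁆ = 0 := by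
      have adI0 : ((LieAlgebra.ad ℂ H (I 0)) : H →ₗ[ℂ] H) = 0 := by
        apply b.ext; intro j
        rcases j with k | k | s
        · show ⁅I 0, b (Sum.inl k)⁆ = (0 : H →ₗ[ℂ] H) (b (Sum.inl k))
          rw [← hL k, ← lie_skew, hLI]
          rcases eq_or_ne k 0 with rfl | hk
          · simp
          · simp [hk]
        · show ⁅I 0, b (Sum.inr (Sum.inl k))⁆ = (0 : H →ₗ[ℂ] H) (b (Sum.inr (Sum.inl k)))
          rw [← hI k, hII]
          split_ifs <;> simp
        · show ⁅I 0, b (Sum.inr (Sum.inr s))⁆ = (0 : H →ₗ[ℂ] H) (b (Sum.inr (Sum.inr s)))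
          rw [hcent s (I 0)]; simp
      intro y
      have h0 : ⁅I 0, y⁆ = 0 := by
        have := DFunLike.congr_fun adI0 y
        simpa using this
      rw [← lie_skew, h0, neg_zero]
    -- sufficient condition for centrality
    have central_of : ∀ x : H, (∀ q : ℤ, b.repr x (Sum.inl q) = 0) →
        (∀ q : ℤ, q ≠ 0 → b.repr x (Sum.inr (Sum.inl q)) = 0) →
        x ∈ LieAlgebra.center ℂ H := by
      intro x h1 h2
      have hx := b.linearCombination_repr x
      rw [Finsupp.linearCombination_apply] at hx
      rw [← hx]
      refine Submodule.sum_mem _ ?_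
      intro i _
      show (b.repr x) i • b i ∈ _
      rcases i with q | q | s
      · rw [h1 q, zero_smul]; exact zero_mem _
      · rcases eq_or_ne q 0 with rfl | hq
        · exact Submodule.smul_mem _ _ (by rw [← hI 0]; exact memcent _ hI0)
        · rw [h2 q hq, zero_smul]; exact zero_mem _
      · exact Submodule.smul_mem _ _ (memcent _ (hcent s))
    -- φ of central elements is central
    have hphiI0 : ∀ y : H, ⁅y, φ (I 0)⁆ = 0 := by
      intro y
      rw [← lie_skew, pol (I 0) y, ← lie_skew (I 0) (φ y), hI0 (φ y)]
      simp
    have hphiC : ∀ (s : Fin 3) (y : H), ⁅y, φ (b (Sum.inr (Sum.inr s)))⁆ = 0 := by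
      intro s y
      rw [← lie_skew, pol (b (Sum.inr (Sum.inr s))) y,
        ← lie_skew (b (Sum.inr (Sum.inr s))) (φ y), hcent s (φ y)]
      simp
    -- assemble
    set lam : ℂ := b.repr (φ (L 0)) (Sum.inl 0) with hlam
    have hA0' : ∀ n q : ℤ, q ≠ n → b.repr (φ (b (Sum.inl n))) (Sum.inl q) = 0 := by
      intro n q h; have := hA0 n q h; rwa [hL n] at this
    have hB0' : ∀ n q : ℤ, q ≠ 0 → b.repr (φ (b (Sum.inl n))) (Sum.inr (Sum.inl q)) = 0 := by
      intro n q h; have := hB0 n q h; rwa [hL n] at this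
    have hAdiag' : ∀ n : ℤ, b.repr (φ (b (Sum.inl n))) (Sum.inl n) = lam := by
      intro n; have := hAdiag n; rwa [hL n] at this
    have hD' : ∀ m q : ℤ, b.repr (φ (b (Sum.inr (Sum.inl m)))) (Sum.inl q) = 0 := by
      intro m q; have := hD m q; rwa [hI m] at this
    have hE' : ∀ m q : ℤ, q ≠ 0 → q ≠ m →
        b.repr (φ (b (Sum.inr (Sum.inl m)))) (Sum.inr (Sum.inl q)) = 0 := by
      intro m q h h'; have := hE m q h h'; rwa [hI m] at this
    have hEd' : ∀ m : ℤ, m ≠ 0 →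
        b.repr (φ (b (Sum.inr (Sum.inl m)))) (Sum.inr (Sum.inl m)) = lam := by
      intro m h; have := hEd m h; rwa [hI m] at this
    refine ⟨lam, φ - lam • LinearMap.id, ?_, ?_⟩
    · have key : ∀ j, φ (b j) - lam • b j ∈ LieAlgebra.center ℂ H := by
        intro j
        rcases j with n | n | s
        · apply central_of
          · intro q
            rw [map_sub, map_smul, Finsupp.sub_apply, Finsupp.smul_apply, b.repr_self]
            rcases eq_or_ne q n with rfl | hq
            · rw [hAdiag' q]
              simp [Finsupp.single_apply]
            · rw [hA0' n q hq]
              simp [Finsupp.single_apply, Ne.symm hq]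
          · intro q hq
            rw [map_sub, map_smul, Finsupp.sub_apply, Finsupp.smul_apply, b.repr_self]
            rw [hB0' n q hq]
            simp [Finsupp.single_apply]
        · rcases eq_or_ne n 0 with rfl | hn
          · rw [← hI 0]
            apply memcent
            intro y
            rw [lie_sub, lie_smul, hI0 y, hphiI0 y, smul_zero, sub_zero]
          · apply central_of
            · intro q
              rw [map_sub, map_smul, Finsupp.sub_apply, Finsupp.smul_apply, b.repr_self]
              rw [hD' n q]
              simp [Finsupp.single_apply]
            · intro q hq
              rw [map_sub, map_smul, Finsupp.sub_apply, Finsupp.smul_apply, b.repr_self]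
              rcases eq_or_ne q n with rfl | hqn
              · rw [hEd' q hn]
                simp [Finsupp.single_apply]
              · rw [hE' n q hq hqn]
                simp [Finsupp.single_apply, Ne.symm hqn]
        · apply memcent
          intro y
          rw [lie_sub, lie_smul, hcent s y, hphiC s y, smul_zero, sub_zero]
      intro x
      have hle : (⊤ : Submodule ℂ H) ≤ Submodule.comap (φ - lam • LinearMap.id)
          (LieSubmodule.toSubmodule (LieAlgebra.center ℂ H)) := by
        rw [← b.span_eq, Submodule.span_le]
        rintro _ ⟨j, rfl⟩
        have := key j
        simp only [SetLike.mem_coe, Submodule.mem_comap, LinearMap.sub_apply,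
          LinearMap.smul_apply, LinearMap.id_apply]
        exact this
      have hx := hle (Submodule.mem_top : x ∈ ⊤)
      simp only [Submodule.mem_comap, LinearMap.sub_apply, LinearMap.smul_apply,
        LinearMap.id_apply] at hx
      exact hx
    · intro x
      simp only [LinearMap.sub_apply, LinearMap.smul_apply, LinearMap.id_apply]
      abel
  · rintro ⟨lam, τ, hτ, hform⟩ x
    rw [hform x, add_lie, smul_lie, lie_self, smul_zero, zero_add]
    have h0 : ⁅x, τ x⁆ = 0 := (LieModule.mem_maxTrivSubmodule ℂ H H (τ x)).1 (hτ x) x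
    rw [← lie_skew, h0, neg_zero]
end

section
/- Let α, β, ε ∈ ℂ with either (Re ε > 0 and ε⁻¹ ∉ ℤ) or (Re ε = 0 and Im ε > 0), and let (𝒜, ∘) be the graded twisted Heisenberg–Virasoro left-symmetric algebra with these parameters. Then every biderivation f of (𝒜, ∘) — i.e. every bilinear map f : 𝒜 × 𝒜 → 𝒜 with f(x∘y, z) = x∘f(y,z) + f(x,z)∘y and f(x, y∘z) = f(x,y)∘z + y∘f(x,z) for all x, y, z ∈ 𝒜 — is trivial: f(x, y) = 0 for all x, y ∈ 𝒜. -/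
private def thvDeg : ℤ ⊕ ℤ ⊕ Fin 3 → ℤ
  | Sum.inl n => n
  | Sum.inr (Sum.inl n) => n
  | Sum.inr (Sum.inr _) => 0

@[simp] private lemma thvDeg_inl (n : ℤ) : thvDeg (Sum.inl n) = n := rfl
@[simp] private lemma thvDeg_inrl (n : ℤ) : thvDeg (Sum.inr (Sum.inl n)) = n := rfl
@[simp] private lemma thvDeg_inrr (q : Fin 3) : thvDeg (Sum.inr (Sum.inr q)) = 0 := rfl

/-- Theorem 4.9: every biderivation of the graded twisted Heisenberg–Virasoro
left-symmetric algebra `(𝒜, ∘)` (with parameters `α, β, ε` satisfying `Re ε > 0, ε⁻¹ ∉ ℤ`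
or `Re ε = 0, Im ε > 0`) is trivial. -/
theorem stmt14 {A : Type*} [AddCommGroup A] [Module ℂ A]
    (α β ε : ℂ)
    (hε : (0 < ε.re ∧ ∀ n : ℤ, ε⁻¹ ≠ (n : ℂ)) ∨ (ε.re = 0 ∧ 0 < ε.im))
    (b : Module.Basis (ℤ ⊕ ℤ ⊕ Fin 3) ℂ A)
    (L I : ℤ → A) (C₁ C₂ C₃ : A)
    (hL : ∀ n : ℤ, L n = b (Sum.inl n))
    (hI : ∀ n : ℤ, I n = b (Sum.inr (Sum.inl n)))
    (hC₁ : C₁ = b (Sum.inr (Sum.inr 0)))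
    (hC₂ : C₂ = b (Sum.inr (Sum.inr 1)))
    (hC₃ : C₃ = b (Sum.inr (Sum.inr 2)))
    -- the left-symmetric product `∘` of the graded twisted Heisenberg–Virasoro
    -- left-symmetric algebra:
    (mul : A →ₗ[ℂ] A →ₗ[ℂ] A)
    (hLL : ∀ m n : ℤ, mul (L m) (L n) =
      (-(n : ℂ) * (1 + ε * n) / (1 + ε * ((m : ℂ) + n))) • L (m + n)
        + (if m = -n then
            ((1 / 24 : ℂ) * ((m : ℂ) ^ 3 - m + (ε - ε⁻¹) * (m : ℂ) ^ 2)) • C₁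
          else 0))
    (hLI : ∀ m n : ℤ, mul (L m) (I n) =
      (-(n : ℂ) * (1 + (1 - ε * n) * α * (if m = -n then (1 : ℂ) else 0))) • I (m + n)
        + (if m = -n then (((m : ℂ) ^ 2 - m + (ε * (m : ℂ) ^ 2 + m) * β)) • C₂ else 0))
    (hIL : ∀ m n : ℤ, mul (I m) (L n) =
      (if m = -n then
        ((n : ℂ) * (1 + ε * n) * α) • I (m + n) + ((n : ℂ) * (1 + ε * n) * β) • C₂
      else 0))
    (hII : ∀ m n : ℤ, mul (I m) (I n) = if m = -n then ((n : ℂ) / 2) • C₃ else 0)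
    (hCzero : ∀ m : ℤ, ∀ c ∈ ({C₁, C₂, C₃} : Set A), ∀ c' ∈ ({C₁, C₂, C₃} : Set A),
      mul c c' = 0 ∧ mul c (L m) = 0 ∧ mul (L m) c = 0 ∧ mul c (I m) = 0 ∧ mul (I m) c = 0)
    -- `f` is a biderivation of `(𝒜, ∘)`:
    (f : A →ₗ[ℂ] A →ₗ[ℂ] A)
    (hf1 : ∀ x y z : A, f (mul x y) z = mul x (f y z) + mul (f x z) y)
    (hf2 : ∀ x y z : A, f x (mul y z) = mul (f x y) z + mul y (f x z)) :
    ∀ x y : A, f x y = 0 := by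
  classical
  -- ### scalar facts
  have smul_cancel : ∀ (c : ℂ) (v : A), c ≠ 0 → c • v = 0 → v = 0 := by
    intro c v hc h
    have := congrArg (fun u : A => c⁻¹ • u) h
    simpa [smul_smul, inv_mul_cancel₀ hc] using this
  have hone : ∀ k : ℤ, (1:ℂ) + ε * (k:ℂ) ≠ 0 := by
    intro k h
    rcases hε with ⟨hre, hni⟩ | ⟨hre, him⟩
    · have hk : ε * (k:ℂ) = -1 := by linear_combination h
      have hmul : ε * (-(k:ℂ)) = 1 := by linear_combination -hk
      exact hni (-k) (by push_cast; exact inv_eq_of_mul_eq_one_right hmul)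
    · have h' : (1 + ε * (k:ℂ)).re = 0 := by rw [h]; simp
      simp [Complex.add_re, Complex.mul_re, hre] at h'
  have hε0 : ε ≠ 0 := by
    intro h0
    rcases hε with ⟨hre, _⟩ | ⟨_, him⟩
    · rw [h0] at hre; simp at hre
    · rw [h0] at him; simp at him
  have heps : ε - ε⁻¹ ≠ 0 := by
    intro h
    rcases hε with ⟨hre, hni⟩ | ⟨hre, him⟩
    · have h2 : ε * ε = 1 := by
        have he : ε = ε⁻¹ := by linear_combination h
        calc ε * ε = ε * ε⁻¹ := by rw [← he]
        _ = 1 := mul_inv_cancel₀ hε0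
      have hfac : (ε - 1) * (ε + 1) = 0 := by ring_nf; linear_combination h2
      rcases mul_eq_zero.mp hfac with h1 | h1
      · have he : ε = 1 := by linear_combination h1
        exact hni 1 (by rw [he]; norm_num)
      · have he : ε = -1 := by linear_combination h1
        exact hni (-1) (by rw [he]; norm_num)
    · have him' : (ε - ε⁻¹).im > 0 := by
        rw [Complex.sub_im, Complex.inv_im]
        have hns : Complex.normSq ε > 0 := Complex.normSq_pos.mpr hε0
        have : -ε.im / Complex.normSq ε < 0 := div_neg_of_neg_of_pos (by linarith) hns
        linarith
      rw [h] at him'; simp at him'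
  have hm1 : (1:ℂ) - ε ≠ 0 := by
    have := hone (-1); push_cast at this
    intro h; exact this (by linear_combination h)
  have hp1 : (1:ℂ) + ε ≠ 0 := by
    have := hone 1; push_cast at this
    intro h; exact this (by linear_combination h)
  -- ### membership facts
  have mC₁ : C₁ ∈ ({C₁, C₂, C₃} : Set A) := by left; rfl
  have mC₂ : C₂ ∈ ({C₁, C₂, C₃} : Set A) := by right; left; rfl
  have mC₃ : C₃ ∈ ({C₁, C₂, C₃} : Set A) := by right; right; rfl
  have hCb : ∀ q : Fin 3, ∃ c ∈ ({C₁, C₂, C₃} : Set A), b (Sum.inr (Sum.inr q)) = c := by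
    intro q
    fin_cases q
    · exact ⟨C₁, mC₁, hC₁.symm⟩
    · exact ⟨C₂, mC₂, hC₂.symm⟩
    · exact ⟨C₃, mC₃, hC₃.symm⟩
  -- ### structural lemmas
  -- left multiplication by L 0 is the grading operator
  have hmulL0 : ∀ i : ℤ ⊕ ℤ ⊕ Fin 3, mul (L 0) (b i) = (-(thvDeg i : ℂ)) • b i := by
    rintro (n | n | q)
    · rw [← hL n, hLL 0 n]
      by_cases hn : n = 0
      · subst hn; norm_num
      · rw [if_neg (by omega)]
        push_cast
        rw [add_zero, zero_add, zero_add, mul_div_assoc, div_self (hone n), mul_one]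
        simp
    · rw [← hI n, hLI 0 n]
      by_cases hn : n = 0
      · subst hn; norm_num
      · rw [if_neg (by omega), if_neg (by omega)]
        simp
    · have h0 : ∀ c ∈ ({C₁, C₂, C₃} : Set A), mul (L 0) c = 0 := fun c hc =>
        (hCzero 0 c hc c hc).2.2.1
      obtain ⟨c, hc, hbc⟩ := hCb q
      rw [hbc]; simp [h0 c hc]
  -- right multiplication by L 0 is zero
  have hmulR0 : ∀ x : A, mul x (L 0) = 0 := by
    have h : mul.flip (L 0) = 0 := by
      apply b.ext
      rintro (n | n | q)
      · rw [LinearMap.flip_apply, ← hL n, hLL n 0]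
        by_cases hn : n = 0
        · subst hn; norm_num
        · rw [if_neg (by omega)]; norm_num
      · rw [LinearMap.flip_apply, ← hI n, hIL n 0]
        by_cases hn : n = 0
        · subst hn; norm_num
        · rw [if_neg (by omega)]; norm_num
      · have h0 : ∀ c ∈ ({C₁, C₂, C₃} : Set A), mul c (L 0) = 0 := fun c hc =>
          (hCzero 0 c hc c hc).2.1
        obtain ⟨c, hc, hbc⟩ := hCb q
        rw [LinearMap.flip_apply, hbc]; simp [h0 c hc]
    intro x
    have := LinearMap.congr_fun h x
    simpa using this
  -- left multiplication by I 0 is zero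
  have hmulI0 : ∀ x : A, mul (I 0) x = 0 := by
    have h : mul (I 0) = 0 := by
      apply b.ext
      rintro (n | n | q)
      · rw [← hL n, hIL 0 n]
        by_cases hn : n = 0
        · subst hn; norm_num
        · rw [if_neg (by omega)]; norm_num
      · rw [← hI n, hII 0 n]
        by_cases hn : n = 0
        · subst hn; norm_num
        · rw [if_neg (by omega)]; norm_num
      · have h0 : ∀ c ∈ ({C₁, C₂, C₃} : Set A), mul (I 0) c = 0 := fun c hc =>
          (hCzero 0 c hc c hc).2.2.2.2
        obtain ⟨c, hc, hbc⟩ := hCb q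
        rw [hbc]; simp [h0 c hc]
    intro x; rw [h]; simp
  -- left multiplication by central elements is zero
  have hmulC : ∀ c ∈ ({C₁, C₂, C₃} : Set A), ∀ x : A, mul c x = 0 := by
    intro c hc
    have h : mul c = 0 := by
      apply b.ext
      rintro (n | n | q)
      · rw [← hL n]; simp [(hCzero n c hc c hc).2.1]
      · rw [← hI n]; simp [(hCzero n c hc c hc).2.2.2.1]
      · obtain ⟨c', hc', hbc⟩ := hCb q
        rw [hbc]; simp [(hCzero 0 c hc c' hc').1]
    intro x; rw [h]; simp
  -- coordinates of the grading operator
  have hrepr : ∀ (j : ℤ ⊕ ℤ ⊕ Fin 3) (w : A),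
      b.repr (mul (L 0) w) j = (-(thvDeg j : ℂ)) * b.repr w j := by
    intro j
    have h : (Finsupp.lapply j).comp (b.repr.toLinearMap.comp (mul (L 0)))
        = (-(thvDeg j : ℂ)) • ((Finsupp.lapply j).comp b.repr.toLinearMap) := by
      apply b.ext
      intro i
      simp only [LinearMap.comp_apply, LinearMap.smul_apply, LinearEquiv.coe_coe,
        Finsupp.lapply_apply, hmulL0 i, map_smul, Module.Basis.repr_self, Finsupp.smul_single,
        smul_eq_mul, mul_one, Finsupp.single_apply]
      by_cases hij : i = j
      · subst hij; simp
      · simp [hij]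
    intro w
    have := LinearMap.congr_fun h w
    simpa using this
  -- elements supported on I 0 and the C's annihilate on the left
  have hann : ∀ w : A, b.repr w (Sum.inl 0) = 0 →
      (∀ j, thvDeg j ≠ 0 → b.repr w j = 0) → ∀ x : A, mul w x = 0 := by
    intro w h0 hdeg x
    have hw : (Finsupp.linearCombination ℂ b) (b.repr w) = w := b.linearCombination_repr w
    rw [← hw, Finsupp.linearCombination_apply, Finsupp.sum, map_sum, LinearMap.coe_sum,
      Finset.sum_apply]
    apply Finset.sum_eq_zero
    intro i hi
    have hi' : b.repr w i ≠ 0 := Finsupp.mem_support_iff.mp hi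
    have hdi : thvDeg i = 0 := by by_contra h; exact hi' (hdeg i h)
    rcases i with n | n | q
    · simp only [thvDeg_inl] at hdi; subst hdi
      exact absurd h0 hi'
    · simp only [thvDeg_inrl] at hdi; subst hdi
      rw [map_smul, LinearMap.smul_apply, ← hI 0, hmulI0 x, smul_zero]
    · rw [map_smul, LinearMap.smul_apply]
      obtain ⟨c, hc, hbc⟩ := hCb q
      rw [hbc, hmulC c hc x, smul_zero]
  -- ### specific products
  have pA : ∀ n : ℤ, n ≠ 0 → mul (L (2*n)) (L (-n)) =
      ((n:ℂ) * (1 - ε*(n:ℂ)) / (1 + ε*(n:ℂ))) • L n := by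
    intro n hn
    have h := hLL (2*n) (-n)
    rw [if_neg (by omega)] at h
    have hidx : 2*n + -n = n := by ring
    rw [hidx] at h
    rw [h, add_zero]
    congr 1
    push_cast
    ring
  have pB : ∀ n : ℤ, n ≠ 0 → mul (L (2*n)) (I (-n)) = (n:ℂ) • I n := by
    intro n hn
    have h := hLI (2*n) (-n)
    rw [if_neg (by omega), if_neg (by omega)] at h
    have hidx : 2*n + -n = n := by ring
    rw [hidx] at h
    rw [h, add_zero]
    congr 1
    push_cast
    ring
  have q1 : mul (L 1) (L (-1)) = ((1:ℂ) - ε) • L 0 + ((ε - ε⁻¹)/24) • C₁ := by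
    have h := hLL 1 (-1)
    rw [if_pos (by omega)] at h
    norm_num at h
    rw [h]
    module
  have q2 : mul (L (-1)) (L 1) = (-((1:ℂ) + ε)) • L 0 + ((ε - ε⁻¹)/24) • C₁ := by
    have h := hLL (-1) 1
    rw [if_pos (by omega)] at h
    norm_num at h
    rw [h]
    module
  have q3 : mul (I 1) (I (-1)) = (-(1:ℂ)/2) • C₃ := by
    have h := hII 1 (-1)
    rw [if_pos (by omega)] at h
    norm_num at h
    rw [h]
    module
  have q4 : mul (I 1) (L (-1)) = (-((1:ℂ)-ε)*α) • I 0 + (-((1:ℂ)-ε)*β) • C₂ := by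
    have h := hIL 1 (-1)
    rw [if_pos (by omega)] at h
    norm_num at h
    rw [h]
    module
  have q5 : mul (L 1) (I (-1)) = ((1 + (1+ε)*α)) • I 0 + ((1+ε)*β) • C₂ := by
    have h := hLI 1 (-1)
    rw [if_pos (by omega), if_pos (by omega)] at h
    norm_num at h
    rw [h]
    module
  have q6 : mul (L (-1)) (I 1) = (-(1 + (1-ε)*α)) • I 0 + (2 + (ε-1)*β) • C₂ := by
    have h := hLI (-1) 1
    rw [if_pos (by omega), if_pos (by omega)] at h
    norm_num at h
    rw [h]
    module
  -- ### Lemma A: derivations preserve the grading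
  have lemA : ∀ d : A →ₗ[ℂ] A, (∀ x y : A, d (mul x y) = mul x (d y) + mul (d x) y) →
      ∀ i j, thvDeg j ≠ thvDeg i → b.repr (d (b i)) j = 0 := by
    intro d hd
    have hA1 : mul (L 0) (d (L 0)) = 0 := by
      have h := hd (L 0) (L 0)
      rw [hmulR0 (L 0), map_zero, hmulR0 (d (L 0))] at h
      rw [add_zero] at h
      exact h.symm
    have hA2 : ∀ j, thvDeg j ≠ 0 → b.repr (d (L 0)) j = 0 := by
      intro j hj
      have h := hrepr j (d (L 0))
      rw [hA1, map_zero, Finsupp.zero_apply] at h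
      rcases mul_eq_zero.mp h.symm with h' | h'
      · exact absurd (by exact_mod_cast neg_eq_zero.mp h') hj
      · exact h'
    set a := b.repr (d (L 0)) (Sum.inl 0) with ha
    have hwann : ∀ x, mul (d (L 0) - a • b (Sum.inl 0)) x = 0 := by
      apply hann
      · rw [map_sub, map_smul, Module.Basis.repr_self, Finsupp.sub_apply, Finsupp.smul_apply,
          Finsupp.single_eq_same, smul_eq_mul, mul_one, sub_self]
      · intro j hj
        have hj0 : Sum.inl (0:ℤ) ≠ j := by
          rintro rfl; simp at hj
        rw [map_sub, map_smul, Module.Basis.repr_self, Finsupp.sub_apply, Finsupp.smul_apply,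
          Finsupp.single_eq_of_ne hj0.symm, smul_eq_mul, mul_zero, sub_zero]
        exact hA2 j hj
    have hDL0 : ∀ x, mul (d (L 0)) x = a • mul (L 0) x := by
      intro x
      have hsplit : d (L 0) = (d (L 0) - a • b (Sum.inl 0)) + a • (L 0) := by
        rw [hL 0]; abel
      rw [hsplit, map_add, LinearMap.add_apply, hwann x, zero_add, map_smul,
        LinearMap.smul_apply]
    have ha0 : a = 0 := by
      have h1 : mul (L 0) (L 1) = ((-1:ℤ):ℂ) • L 1 := by
        rw [hL 1]; exact_mod_cast hmulL0 (Sum.inl 1)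
      have h := hd (L 0) (L 1)
      rw [h1, map_smul, hDL0 (L 1), h1] at h
      have h' := congrArg (fun v => b.repr v (Sum.inl 1)) h
      simp only [map_smul, Finsupp.smul_apply, smul_eq_mul, map_add, Finsupp.add_apply,
        hrepr, hL 1, Module.Basis.repr_self, Finsupp.single_eq_same,
        thvDeg_inl] at h'
      push_cast at h'
      linear_combination h'
    have hDL0' : ∀ x, mul (d (L 0)) x = 0 := by
      intro x; rw [hDL0 x, ha0, zero_smul]
    intro i j hj
    have h5 : mul (L 0) (d (b i)) = (-(thvDeg i : ℂ)) • d (b i) := by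
      have h := hd (L 0) (b i)
      rw [hmulL0 i, map_smul, hDL0' (b i), add_zero] at h
      exact h.symm
    have h6 := congrArg (fun v => b.repr v j) h5
    simp only [hrepr, map_smul, Finsupp.smul_apply, smul_eq_mul] at h6
    have hcast : (thvDeg i : ℂ) ≠ (thvDeg j : ℂ) := by
      exact_mod_cast fun h => hj (by exact_mod_cast h.symm)
    have hz : ((thvDeg i : ℂ) - (thvDeg j : ℂ)) * (b.repr (d (b i)) j) = 0 := by
      linear_combination h6
    rcases mul_eq_zero.mp hz with h' | h'
    · exact absurd (sub_eq_zero.mp h') hcast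
    · exact h'
  -- ### Lemma B: a derivation vanishing off one degree vanishes
  have lemB : ∀ d : A →ₗ[ℂ] A, (∀ x y : A, d (mul x y) = mul x (d y) + mul (d x) y) →
      ∀ n : ℤ, (∀ i, thvDeg i ≠ n → d (b i) = 0) → ∀ i, d (b i) = 0 := by
    intro d hd n hvan
    by_cases hn : n = 0
    · subst hn
      have hvL : ∀ m : ℤ, m ≠ 0 → d (L m) = 0 := fun m hm => by
        rw [hL m]; exact hvan (Sum.inl m) (by simpa using hm)
      have hvI : ∀ m : ℤ, m ≠ 0 → d (I m) = 0 := fun m hm => by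
        rw [hI m]; exact hvan (Sum.inr (Sum.inl m)) (by simpa using hm)
      have E1 : ((1:ℂ) - ε) • d (L 0) + ((ε - ε⁻¹)/24) • d C₁ = 0 := by
        have h := hd (L 1) (L (-1))
        rw [q1, map_add, map_smul, map_smul, hvL 1 (by norm_num),
          hvL (-1) (by norm_num)] at h
        simpa using h
      have E2 : (-((1:ℂ) + ε)) • d (L 0) + ((ε - ε⁻¹)/24) • d C₁ = 0 := by
        have h := hd (L (-1)) (L 1)
        rw [q2, map_add, map_smul, map_smul, hvL 1 (by norm_num),
          hvL (-1) (by norm_num)] at h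
        simpa using h
      have E3' : (-((1:ℂ)-ε)*α) • d (I 0) + (-((1:ℂ)-ε)*β) • d C₂ = 0 := by
        have h := hd (I 1) (L (-1))
        rw [q4, map_add, map_smul, map_smul, hvI 1 (by norm_num),
          hvL (-1) (by norm_num)] at h
        simpa using h
      have E4 : ((1:ℂ) + (1+ε)*α) • d (I 0) + ((1+ε)*β) • d C₂ = 0 := by
        have h := hd (L 1) (I (-1))
        rw [q5, map_add, map_smul, map_smul, hvL 1 (by norm_num),
          hvI (-1) (by norm_num)] at h
        simpa using h
      have E5 : (-((1:ℂ) + (1-ε)*α)) • d (I 0) + ((2:ℂ) + (ε-1)*β) • d C₂ = 0 := by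
        have h := hd (L (-1)) (I 1)
        rw [q6, map_add, map_smul, map_smul, hvL (-1) (by norm_num),
          hvI 1 (by norm_num)] at h
        simpa using h
      have h2L0 : (2:ℂ) • d (L 0) = 0 := by
        have hkey : (2:ℂ) • d (L 0) = (((1:ℂ) - ε) • d (L 0) + ((ε - ε⁻¹)/24) • d C₁)
            - ((-((1:ℂ) + ε)) • d (L 0) + ((ε - ε⁻¹)/24) • d C₁) := by module
        rw [hkey, E1, E2, sub_zero]
      have hdL0 : d (L 0) = 0 := smul_cancel 2 _ two_ne_zero h2L0
      have hdC1 : d C₁ = 0 := by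
        have h := E1
        rw [hdL0, smul_zero, zero_add] at h
        exact smul_cancel _ _ (div_ne_zero heps (by norm_num)) h
      have E3 : α • d (I 0) + β • d C₂ = 0 := by
        apply smul_cancel (-((1:ℂ)-ε)) _ (neg_ne_zero.mpr hm1)
        have hkey : (-((1:ℂ)-ε)) • (α • d (I 0) + β • d C₂)
            = (-((1:ℂ)-ε)*α) • d (I 0) + (-((1:ℂ)-ε)*β) • d C₂ := by module
        rw [hkey]; exact E3'
      have hdI0 : d (I 0) = 0 := by
        have hkey : d (I 0) = (((1:ℂ) + (1+ε)*α) • d (I 0) + ((1+ε)*β) • d C₂)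
            - ((1:ℂ)+ε) • (α • d (I 0) + β • d C₂) := by module
        rw [hkey, E4, E3, smul_zero, sub_zero]
      have hbC2 : β • d C₂ = 0 := by
        have h := E3
        rw [hdI0, smul_zero, zero_add] at h
        exact h
      have h2C2 : (2:ℂ) • d C₂ = 0 := by
        have hkey : (2:ℂ) • d C₂ = ((-((1:ℂ) + (1-ε)*α)) • d (I 0) + ((2:ℂ) + (ε-1)*β) • d C₂)
            + ((1:ℂ) + (1-ε)*α) • d (I 0) - (ε-1) • (β • d C₂) := by module
        rw [hkey, E5, hdI0, hbC2]; simp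
      have hdC2 : d C₂ = 0 := smul_cancel 2 _ two_ne_zero h2C2
      have hdC3 : d C₃ = 0 := by
        have h := hd (I 1) (I (-1))
        rw [q3, map_smul, hvI 1 (by norm_num), hvI (-1) (by norm_num)] at h
        have h0 : (-(1:ℂ)/2) • d C₃ = 0 := by simpa using h
        exact smul_cancel _ _ (by norm_num) h0
      rintro (m | m | q)
      · by_cases hm : m = 0
        · subst hm; rw [← hL 0]; exact hdL0
        · exact hvan _ (by simpa using hm)
      · by_cases hm : m = 0
        · subst hm; rw [← hI 0]; exact hdI0
        · exact hvan _ (by simpa using hm)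
      · obtain ⟨c, hc, hbc⟩ := hCb q
        rw [hbc]
        simp only [Set.mem_insert_iff, Set.mem_singleton_iff] at hc
        rcases hc with rfl | rfl | rfl
        · exact hdC1
        · exact hdC2
        · exact hdC3
    · have hvL : ∀ m : ℤ, m ≠ n → d (L m) = 0 := fun m hm => by
        rw [hL m]; exact hvan (Sum.inl m) (by simpa using hm)
      have hvI : ∀ m : ℤ, m ≠ n → d (I m) = 0 := fun m hm => by
        rw [hI m]; exact hvan (Sum.inr (Sum.inl m)) (by simpa using hm)
      have hdLn : d (L n) = 0 := by
        have h := hd (L (2*n)) (L (-n))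
        rw [pA n hn, map_smul, hvL (2*n) (by omega), hvL (-n) (by omega)] at h
        have h0 : ((n:ℂ) * (1 - ε*(n:ℂ)) / (1 + ε*(n:ℂ))) • d (L n) = 0 := by simpa using h
        refine smul_cancel _ _ ?_ h0
        apply div_ne_zero
        · apply mul_ne_zero (Int.cast_ne_zero.mpr hn)
          have h1 := hone (-n); push_cast at h1
          intro hcontra; exact h1 (by linear_combination hcontra)
        · exact hone n
      have hdIn : d (I n) = 0 := by
        have h := hd (L (2*n)) (I (-n))
        rw [pB n hn, map_smul, hvL (2*n) (by omega), hvI (-n) (by omega)] at h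
        have h0 : (n:ℂ) • d (I n) = 0 := by simpa using h
        exact smul_cancel _ _ (Int.cast_ne_zero.mpr hn) h0
      rintro (m | m | q)
      · by_cases hm : m = n
        · subst hm; rw [← hL m]; exact hdLn
        · exact hvan _ (by simpa using hm)
      · by_cases hm : m = n
        · subst hm; rw [← hI m]; exact hdIn
        · exact hvan _ (by simpa using hm)
      · exact hvan _ (by simpa using fun h => hn h.symm)
  -- ### combine the two partial derivations
  have hdA : ∀ k i j, thvDeg j ≠ thvDeg i → b.repr (f (b i) (b k)) j = 0 := by
    intro k
    have h := lemA (f.flip (b k)) (fun x y => by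
      simp only [LinearMap.flip_apply]; exact hf1 x y (b k))
    intro i j hj
    simpa using h i j hj
  have hdB : ∀ i k j, thvDeg j ≠ thvDeg k → b.repr (f (b i) (b k)) j = 0 := by
    intro i
    exact lemA (f (b i)) (fun y z => by rw [hf2 (b i) y z, add_comm])
  have OD : ∀ i k, thvDeg i ≠ thvDeg k → f (b i) (b k) = 0 := by
    intro i k h
    have hr : b.repr (f (b i) (b k)) = 0 := by
      ext j
      rw [Finsupp.zero_apply]
      by_cases hji : thvDeg j = thvDeg i
      · exact hdB i k j (by rw [hji]; exact h)
      · exact hdA k i j hji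
    exact (LinearEquiv.map_eq_zero_iff b.repr).mp hr
  have key : ∀ i k, f (b i) (b k) = 0 := by
    intro i k
    have hres := lemB (f.flip (b k)) (fun x y => by
        simp only [LinearMap.flip_apply]; exact hf1 x y (b k)) (thvDeg k)
      (fun i' hi' => by simpa using OD i' k hi') i
    simpa using hres
  intro x y
  have hzero : f = 0 := by
    apply b.ext; intro i
    apply b.ext; intro k
    simpa using key i k
  rw [hzero]; simp
end
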